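/- arXiv:0805.0380 — 5 statements merged into one kernel-verified Lean document; each statement's English description precedes it below -/
import Mathlib

section
/- The Green functions are consistent across levels: for every n ≥ 1, every y ∈ V_n∖V₀ and every x ∈ V_n, one has G_{n+1}(x,y) = G_n(x,y). -/
open scoped Classical
open Real Set

noncomputable section

abbrev Pt : Type := ℝ × ℝ

/-- The three corners of the unit triangle. -/
def sierA : Fin 3 → Pt
  | 0 => (0, 0)
  | 1 => (1 / 2, Real.sqrt 3 / 2)
  | 2 => (1, 0)

/-- The three contractions `φᵢ(x) = (x + aᵢ)/2`. -/
def ctr (i : Fin 3) (x : Pt) : Pt :=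
  ((x.1 + (sierA i).1) / 2, (x.2 + (sierA i).2) / 2)

/-- The vertex sets `V n`. -/
def V : ℕ → Finset Pt
  | 0 => {sierA 0, sierA 1, sierA 2}
  | n + 1 => (V n).image (ctr 0) ∪ (V n).image (ctr 1) ∪ (V n).image (ctr 2)

/-- The (ordered) edge sets: `(x, y) ∈ Ed n` iff `{x,y} ∈ E_n`; each undirected
edge appears with both orientations. -/
def Ed : ℕ → Finset (Pt × Pt)
  | 0 => (V 0 ×ˢ V 0).filter fun p => p.1 ≠ p.2
  | n + 1 => Finset.univ.biUnion fun i : Fin 3 => (Ed n).image fun p => (ctr i p.1, ctr i p.2)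

/-- `V* = ⋃ n, V n`. -/
def Vstar : Set Pt := ⋃ n, (V n : Set Pt)

/-- The level-`n` energy `E_n(u,u) = (5/3)^n Σ_{{x,y} ∈ E_n} (u y - u x)²`
(each undirected edge counted once, whence the division by 2). -/
def En (n : ℕ) (u : Pt → ℝ) : ℝ :=
  (5 / 3 : ℝ) ^ n * (∑ p ∈ Ed n, (u p.2 - u p.1) ^ 2) / 2

/-- The discrete Laplacian `Δ_n u (x) = 5^n Σ_{y ∼ₙ x} (u y - u x)`. -/
def lap (n : ℕ) (u : Pt → ℝ) (x : Pt) : ℝ :=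
  (5 : ℝ) ^ n * ∑ p ∈ (Ed n).filter (fun p => p.1 = x), (u p.2 - u p.1)

/-- `g` is the level-`n` Green function with pole at `y`: it solves the
discrete Dirichlet problem `Δ_n g (y) = −3^n`, `Δ_n g (x) = 0` for
`x ∈ V_n ∖ (V₀ ∪ {y})`, and `g = 0` on `V₀ = {a₀,a₁,a₂}`. -/
def IsGreen (n : ℕ) (y : Pt) (g : Pt → ℝ) : Prop :=
  lap n g y = -(3 : ℝ) ^ n ∧
  (∀ x ∈ (V n : Set Pt), x ∉ (V 0 : Set Pt) → x ≠ y → lap n g x = 0) ∧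
  ∀ i : Fin 3, g (sierA i) = 0

lemma s3pos : (0:ℝ) < Real.sqrt 3 := Real.sqrt_pos.mpr (by norm_num)

def T : Set Pt := {p | 0 ≤ p.2 ∧ p.2 ≤ Real.sqrt 3 * p.1 ∧ p.2 ≤ Real.sqrt 3 * (1 - p.1)}

lemma ov01 {z w : Pt} (hz : z ∈ T) (hw : w ∈ T) (h : ctr 0 z = ctr 1 w) :
    z = sierA 1 ∧ w = sierA 0 := by
  have h3 := s3pos
  obtain ⟨z1, z2, z3⟩ := hz; obtain ⟨w1, w2, w3⟩ := hw
  simp only [ctr, sierA, Prod.mk.injEq] at h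
  obtain ⟨e1, e2⟩ := h
  ring_nf at z2 z3 w2 w3 e1 e2
  have hw2 : w.2 = 0 := by linarith
  have hz2 : z.2 = Real.sqrt 3 / 2 := by linarith
  have h1 : Real.sqrt 3 * z.1 = Real.sqrt 3 * (1/2) := by linarith
  have hz1 : z.1 = 1/2 := mul_left_cancel₀ h3.ne' h1
  have hw1 : w.1 = 0 := by linarith
  constructor <;> rw [Prod.ext_iff] <;> simp [sierA] <;> constructor <;> linarith

lemma ov02 {z w : Pt} (hz : z ∈ T) (hw : w ∈ T) (h : ctr 0 z = ctr 2 w) :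
    z = sierA 2 ∧ w = sierA 0 := by
  have h3 := s3pos
  obtain ⟨z1, z2, z3⟩ := hz; obtain ⟨w1, w2, w3⟩ := hw
  simp only [ctr, sierA, Prod.mk.injEq] at h
  obtain ⟨e1, e2⟩ := h
  ring_nf at z2 z3 w2 w3 e1 e2
  have hA : 0 ≤ Real.sqrt 3 * w.1 := by linarith
  have hw1 : 0 ≤ w.1 := nonneg_of_mul_nonneg_right (by linarith) h3
  have hz1ge : 1 ≤ z.1 := by linarith
  have hB : Real.sqrt 3 * 1 ≤ Real.sqrt 3 * z.1 := mul_le_mul_of_nonneg_left hz1ge h3.le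
  rw [mul_one] at hB
  have hz2 : z.2 = 0 := by linarith
  have hw2 : w.2 = 0 := by linarith
  have h1 : Real.sqrt 3 * z.1 = Real.sqrt 3 * 1 := by rw [mul_one]; linarith
  have hz1 : z.1 = 1 := mul_left_cancel₀ h3.ne' h1
  have hw1' : w.1 = 0 := by linarith
  constructor <;> rw [Prod.ext_iff] <;> simp [sierA] <;> constructor <;> linarith

lemma ov12 {z w : Pt} (hz : z ∈ T) (hw : w ∈ T) (h : ctr 1 z = ctr 2 w) :
    z = sierA 2 ∧ w = sierA 1 := by
  have h3 := s3pos
  obtain ⟨z1, z2, z3⟩ := hz; obtain ⟨w1, w2, w3⟩ := hw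
  simp only [ctr, sierA, Prod.mk.injEq] at h
  obtain ⟨e1, e2⟩ := h
  ring_nf at z2 z3 w2 w3 e1 e2
  have hw2 : w.2 = Real.sqrt 3 / 2 := by linarith
  have hz2 : z.2 = 0 := by linarith
  have h1 : Real.sqrt 3 * w.1 = Real.sqrt 3 * (1/2) := by linarith
  have hw1 : w.1 = 1/2 := mul_left_cancel₀ h3.ne' h1
  have hz1 : z.1 = 1 := by linarith
  constructor <;> rw [Prod.ext_iff] <;> simp [sierA] <;> constructor <;> linarith

lemma overlap {i j : Fin 3} (hij : i ≠ j) {z w : Pt} (hz : z ∈ T) (hw : w ∈ T)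
    (h : ctr i z = ctr j w) : z = sierA j ∧ w = sierA i := by
  fin_cases i <;> fin_cases j <;> first
    | exact absurd rfl hij
    | exact ov01 hz hw h
    | exact ov02 hz hw h
    | exact ov12 hz hw h
    | exact (ov01 hw hz h.symm).symm.imp id id
    | exact (ov02 hw hz h.symm).symm.imp id id
    | exact (ov12 hw hz h.symm).symm.imp id id

lemma ctr_inj (i : Fin 3) : Function.Injective (ctr i) := by
  intro a b h
  simp only [ctr, Prod.mk.injEq] at h
  rw [Prod.ext_iff]
  exact ⟨by linarith [h.1], by linarith [h.2]⟩

def cinv (i : Fin 3) (x : Pt) : Pt := (2 * x.1 - (sierA i).1, 2 * x.2 - (sierA i).2)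

lemma cinv_ctr (i : Fin 3) (z : Pt) : cinv i (ctr i z) = z := by
  rw [Prod.ext_iff]; simp [cinv, ctr]; constructor <;> ring

lemma ctr_cinv (i : Fin 3) (x : Pt) : ctr i (cinv i x) = x := by
  rw [Prod.ext_iff]; refine ⟨?_, ?_⟩ <;> simp [cinv, ctr] <;> ring

lemma mem_V_succ {n : ℕ} {x : Pt} :
    x ∈ V (n + 1) ↔ ∃ i : Fin 3, ∃ z ∈ V n, ctr i z = x := by
  show x ∈ (V n).image (ctr 0) ∪ (V n).image (ctr 1) ∪ (V n).image (ctr 2) ↔ _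
  simp only [Finset.mem_union, Finset.mem_image]
  constructor
  · rintro ((h | h) | h)
    exacts [⟨0, h⟩, ⟨1, h⟩, ⟨2, h⟩]
  · rintro ⟨i, h⟩
    fin_cases i
    exacts [Or.inl (Or.inl h), Or.inl (Or.inr h), Or.inr h]

lemma sierA_mem_T (i : Fin 3) : sierA i ∈ T := by
  have h := s3pos
  fin_cases i <;> refine ⟨?_, ?_, ?_⟩ <;> simp [sierA, T] <;> ring_nf <;> linarith

lemma ctr_mem_T {i : Fin 3} {x : Pt} (hx : x ∈ T) : ctr i x ∈ T := by
  have h := s3pos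
  obtain ⟨h1, h2, h3⟩ := hx
  obtain ⟨g1, g2, g3⟩ := sierA_mem_T i
  refine ⟨?_, ?_, ?_⟩ <;> simp only [ctr] <;> nlinarith

lemma V_subset_T : ∀ n, ∀ x ∈ V n, x ∈ T := by
  intro n
  induction n with
  | zero =>
    intro x hx
    have : x = sierA 0 ∨ x = sierA 1 ∨ x = sierA 2 := by simpa [V] using hx
    rcases this with h | h | h <;> subst h <;> exact sierA_mem_T _
  | succ n ih =>
    intro x hx
    rw [mem_V_succ] at hx
    obtain ⟨i, z, hz, rfl⟩ := hx
    exact ctr_mem_T (ih z hz)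

lemma ctr_mem_V_succ {n : ℕ} {z : Pt} (i : Fin 3) (hz : z ∈ V n) : ctr i z ∈ V (n+1) :=
  mem_V_succ.mpr ⟨i, z, hz, rfl⟩

lemma ctr_fix (i : Fin 3) : ctr i (sierA i) = sierA i := by
  rw [Prod.ext_iff]; refine ⟨?_, ?_⟩ <;> simp [ctr] <;> ring

lemma V0_subset (n : ℕ) : V 0 ⊆ V n := by
  induction n with
  | zero => exact Finset.Subset.refl _
  | succ n ih =>
    intro x hx
    have : x = sierA 0 ∨ x = sierA 1 ∨ x = sierA 2 := by simpa [V] using hx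
    rcases this with h | h | h <;> subst h <;>
      exact (ctr_fix _) ▸ ctr_mem_V_succ _ (ih (by simp [V]))

lemma V_mono_succ (n : ℕ) : V n ⊆ V (n + 1) := by
  induction n with
  | zero => exact V0_subset 1
  | succ n ih =>
    intro x hx
    rw [mem_V_succ] at hx ⊢
    obtain ⟨i, z, hz, rfl⟩ := hx
    exact ⟨i, z, ih hz, rfl⟩

lemma Ed_mem_V : ∀ n, ∀ p ∈ Ed n, p.1 ∈ V n ∧ p.2 ∈ V n := by
  intro n
  induction n with
  | zero =>
    intro p hp
    have := Finset.mem_filter.mp hp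
    have := Finset.mem_product.mp this.1
    exact this
  | succ n ih =>
    intro p hp
    simp only [Ed, Finset.mem_biUnion, Finset.mem_image] at hp
    obtain ⟨i, -, q, hq, rfl⟩ := hp
    exact ⟨ctr_mem_V_succ i (ih q hq).1, ctr_mem_V_succ i (ih q hq).2⟩

lemma Ed_ne : ∀ n, ∀ p ∈ Ed n, p.1 ≠ p.2 := by
  intro n
  induction n with
  | zero => intro p hp; exact (Finset.mem_filter.mp hp).2
  | succ n ih =>
    intro p hp
    simp only [Ed, Finset.mem_biUnion, Finset.mem_image] at hp
    obtain ⟨i, -, q, hq, rfl⟩ := hp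
    exact fun h => ih q hq (ctr_inj i h)

lemma Ed_symm : ∀ n, ∀ p ∈ Ed n, p.swap ∈ Ed n := by
  intro n
  induction n with
  | zero =>
    intro p hp
    have h1 := Finset.mem_filter.mp hp
    have h2 := Finset.mem_product.mp h1.1
    exact Finset.mem_filter.mpr ⟨Finset.mem_product.mpr ⟨h2.2, h2.1⟩, Ne.symm h1.2⟩
  | succ n ih =>
    intro p hp
    simp only [Ed, Finset.mem_biUnion, Finset.mem_image] at hp ⊢
    obtain ⟨i, -, q, hq, rfl⟩ := hp
    exact ⟨i, Finset.mem_univ i, q.swap, ih q hq, rfl⟩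

/-- unnormalized Laplacian -/
def L (n : ℕ) (u : Pt → ℝ) (x : Pt) : ℝ :=
  ∑ p ∈ (Ed n).filter (fun p => p.1 = x), (u p.2 - u p.1)

lemma lap_eq (n : ℕ) (u : Pt → ℝ) (x : Pt) : lap n u x = (5:ℝ)^n * L n u x := rfl

lemma L_empty {n : ℕ} {x : Pt} (hx : x ∉ V n) (u : Pt → ℝ) : L n u x = 0 := by
  unfold L
  rw [Finset.filter_false_of_mem, Finset.sum_empty]
  intro p hp h
  exact hx (h ▸ (Ed_mem_V n p hp).1)

lemma F_inj (i : Fin 3) : Function.Injective (fun p : Pt × Pt => (ctr i p.1, ctr i p.2)) := by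
  intro p q h
  simp only [Prod.mk.injEq] at h
  exact Prod.ext (ctr_inj i h.1) (ctr_inj i h.2)

lemma L_succ (n : ℕ) (v : Pt → ℝ) (x : Pt) :
    L (n + 1) v x = ∑ i : Fin 3, L n (fun w => v (ctr i w)) (cinv i x) := by
  unfold L
  have hEd : Ed (n+1) = Finset.univ.biUnion
      fun i : Fin 3 => (Ed n).image fun p => (ctr i p.1, ctr i p.2) := rfl
  rw [hEd, Finset.filter_biUnion, Finset.sum_biUnion]
  · refine Finset.sum_congr rfl fun i _ => ?_
    have himg : ((Ed n).image fun p => (ctr i p.1, ctr i p.2)).filter (fun p => p.1 = x)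
        = ((Ed n).filter fun p => ctr i p.1 = x).image fun p => (ctr i p.1, ctr i p.2) := by
      rw [Finset.filter_image]
    rw [himg, Finset.sum_image (fun a _ b _ h => F_inj i h)]
    have hfil : ((Ed n).filter fun p => ctr i p.1 = x) = (Ed n).filter fun p => p.1 = cinv i x := by
      apply Finset.filter_congr
      intro p _
      constructor
      · rintro rfl; exact (cinv_ctr i p.1).symm ▸ rfl
      · intro h; rw [h, ctr_cinv]
    rw [hfil]
  · -- pairwise disjointness of the filtered images
    intro i _ j _ hij
    simp only [Function.onFun]
    rw [Finset.disjoint_left]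
    intro p hp hq
    simp only [Finset.mem_filter, Finset.mem_image] at hp hq
    obtain ⟨⟨a, ha, rfl⟩, -⟩ := hp
    obtain ⟨⟨b, hb, hEq⟩, -⟩ := hq
    have hT1 := V_subset_T n _ (Ed_mem_V n a ha).1
    have hT2 := V_subset_T n _ (Ed_mem_V n a ha).2
    have hT1' := V_subset_T n _ (Ed_mem_V n b hb).1
    have hT2' := V_subset_T n _ (Ed_mem_V n b hb).2
    have e1 : ctr j b.1 = ctr i a.1 := congrArg Prod.fst hEq
    have e2 : ctr j b.2 = ctr i a.2 := congrArg Prod.snd hEq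
    have o1 := overlap hij.symm hT1' hT1 e1
    have o2 := overlap hij.symm hT2' hT2 e2
    exact Ed_ne n b hb (o1.1.trans o2.1.symm)

-- ===== named points =====
def M01 : Pt := ctr 0 (sierA 1)
def M02 : Pt := ctr 0 (sierA 2)
def M12 : Pt := ctr 1 (sierA 2)

lemma ne_fst {p q : Pt} (h : p.1 ≠ q.1) : p ≠ q := fun e => h (congrArg Prod.fst e)
lemma ne_snd {p q : Pt} (h : p.2 ≠ q.2) : p ≠ q := fun e => h (congrArg Prod.snd e)

lemma neA0A1 : sierA 0 ≠ sierA 1 := ne_fst (by norm_num [sierA])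
lemma neA0A2 : sierA 0 ≠ sierA 2 := ne_fst (by norm_num [sierA])
lemma neA1A2 : sierA 1 ≠ sierA 2 := ne_fst (by norm_num [sierA])
lemma neA0M01 : sierA 0 ≠ M01 := ne_fst (by norm_num [sierA, M01, ctr])
lemma neA0M02 : sierA 0 ≠ M02 := ne_fst (by norm_num [sierA, M02, ctr])
lemma neA0M12 : sierA 0 ≠ M12 := ne_fst (by norm_num [sierA, M12, ctr])
lemma neA1M01 : sierA 1 ≠ M01 := ne_fst (by norm_num [sierA, M01, ctr])
lemma neA1M02 : sierA 1 ≠ M02 := ne_snd (by norm_num [sierA, M02, ctr, s3pos.ne'])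
lemma neA1M12 : sierA 1 ≠ M12 := ne_fst (by norm_num [sierA, M12, ctr])
lemma neA2M01 : sierA 2 ≠ M01 := ne_fst (by norm_num [sierA, M01, ctr])
lemma neA2M02 : sierA 2 ≠ M02 := ne_fst (by norm_num [sierA, M02, ctr])
lemma neA2M12 : sierA 2 ≠ M12 := ne_fst (by norm_num [sierA, M12, ctr])
lemma neM01M02 : M01 ≠ M02 := ne_fst (by norm_num [M01, M02, ctr, sierA])
lemma neM01M12 : M01 ≠ M12 := ne_fst (by norm_num [M01, M12, ctr, sierA])
lemma neM02M12 : M02 ≠ M12 := ne_fst (by norm_num [M02, M12, ctr, sierA])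

-- table of ctr i (sierA k)
lemma tb00 : ctr 0 (sierA 0) = sierA 0 := ctr_fix 0
lemma tb11 : ctr 1 (sierA 1) = sierA 1 := ctr_fix 1
lemma tb22 : ctr 2 (sierA 2) = sierA 2 := ctr_fix 2
lemma tb01 : ctr 0 (sierA 1) = M01 := rfl
lemma tb02 : ctr 0 (sierA 2) = M02 := rfl
lemma tb12 : ctr 1 (sierA 2) = M12 := rfl
lemma tb10 : ctr 1 (sierA 0) = M01 := by
  rw [M01, Prod.ext_iff]; refine ⟨?_, ?_⟩ <;> simp [ctr, sierA] <;> ring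
lemma tb20 : ctr 2 (sierA 0) = M02 := by
  rw [M02, Prod.ext_iff]; refine ⟨?_, ?_⟩ <;> simp [ctr, sierA] <;> ring
lemma tb21 : ctr 2 (sierA 1) = M12 := by
  rw [M12, Prod.ext_iff]; refine ⟨?_, ?_⟩ <;> simp [ctr, sierA] <;> ring

-- ===== harmonic extension =====
def hext : ℕ → (Pt → ℝ) → Pt → ℝ
  | 0, u => fun x =>
    if x = M01 then (2*u (sierA 0) + 2*u (sierA 1) + u (sierA 2))/5
    else if x = M12 then (2*u (sierA 1) + 2*u (sierA 2) + u (sierA 0))/5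
    else if x = M02 then (2*u (sierA 0) + 2*u (sierA 2) + u (sierA 1))/5
    else u x
  | n+1, u => fun x =>
    if cinv 0 x ∈ V (n+1) then hext n (fun w => u (ctr 0 w)) (cinv 0 x)
    else if cinv 1 x ∈ V (n+1) then hext n (fun w => u (ctr 1 w)) (cinv 1 x)
    else hext n (fun w => u (ctr 2 w)) (cinv 2 x)

lemma hext0_M01 (u : Pt → ℝ) : hext 0 u M01 = (2*u (sierA 0) + 2*u (sierA 1) + u (sierA 2))/5 := by
  simp [hext]
lemma hext0_M12 (u : Pt → ℝ) : hext 0 u M12 = (2*u (sierA 1) + 2*u (sierA 2) + u (sierA 0))/5 := by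
  simp [hext, neM01M12.symm]
lemma hext0_M02 (u : Pt → ℝ) : hext 0 u M02 = (2*u (sierA 0) + 2*u (sierA 2) + u (sierA 1))/5 := by
  simp [hext, neM01M02.symm, neM02M12]
lemma hext0_A (u : Pt → ℝ) (i : Fin 3) : hext 0 u (sierA i) = u (sierA i) := by
  fin_cases i <;>
    simp [hext, neA0M01, neA0M02, neA0M12, neA1M01, neA1M02, neA1M12, neA2M01, neA2M02, neA2M12]

lemma sierA_mem_V0 (i : Fin 3) : sierA i ∈ V 0 := by fin_cases i <;> simp [V]
lemma sierA_mem_V (n : ℕ) (i : Fin 3) : sierA i ∈ V n := V0_subset n (sierA_mem_V0 i)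

lemma fin3_cases (i : Fin 3) : i = 0 ∨ i = 1 ∨ i = 2 := by fin_cases i <;> decide

lemma ctr_comm (i j : Fin 3) : ctr i (sierA j) = ctr j (sierA i) := by
  rcases fin3_cases i with rfl | rfl | rfl <;> rcases fin3_cases j with rfl | rfl | rfl <;>
    first
      | rfl
      | (rw [tb01, tb10]) | (rw [tb10, tb01]) | (rw [tb02, tb20]) | (rw [tb20, tb02])
      | (rw [tb12, tb21]) | (rw [tb21, tb12])

lemma hext_compat_of_agree (n : ℕ) (hagree : ∀ u, ∀ x ∈ V n, hext n u x = u x) :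
    ∀ (u : Pt → ℝ) (i : Fin 3), ∀ z ∈ V (n+1),
      hext (n+1) u (ctr i z) = hext n (fun w => u (ctr i w)) z := by
  intro u i z hz
  have hzT : z ∈ T := V_subset_T _ z hz
  have key : ∀ j : Fin 3, j ≠ i → cinv j (ctr i z) ∈ V (n+1) →
      hext n (fun w => u (ctr j w)) (cinv j (ctr i z)) = hext n (fun w => u (ctr i w)) z := by
    intro j hji hj
    obtain ⟨h1, h2⟩ := overlap hji (V_subset_T _ _ hj) hzT (ctr_cinv j (ctr i z))
    rw [h1, h2, hagree _ _ (sierA_mem_V n i), hagree _ _ (sierA_mem_V n j), ctr_comm]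
  show (if cinv 0 (ctr i z) ∈ V (n+1) then hext n (fun w => u (ctr 0 w)) (cinv 0 (ctr i z))
    else if cinv 1 (ctr i z) ∈ V (n+1) then hext n (fun w => u (ctr 1 w)) (cinv 1 (ctr i z))
    else hext n (fun w => u (ctr 2 w)) (cinv 2 (ctr i z))) = hext n (fun w => u (ctr i w)) z
  rcases fin3_cases i with rfl | rfl | rfl
  · rw [if_pos (by rw [cinv_ctr]; exact hz), cinv_ctr]
  · by_cases h0 : cinv 0 (ctr 1 z) ∈ V (n+1)
    · rw [if_pos h0]; exact key 0 (by decide) h0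
    · rw [if_neg h0, if_pos (by rw [cinv_ctr]; exact hz), cinv_ctr]
  · by_cases h0 : cinv 0 (ctr 2 z) ∈ V (n+1)
    · rw [if_pos h0]; exact key 0 (by decide) h0
    · by_cases h1 : cinv 1 (ctr 2 z) ∈ V (n+1)
      · rw [if_neg h0, if_pos h1]; exact key 1 (by decide) h1
      · rw [if_neg h0, if_neg h1, cinv_ctr]

lemma hext_agree : ∀ n, ∀ u : Pt → ℝ, ∀ x ∈ V n, hext n u x = u x := by
  intro n
  induction n with
  | zero =>
    intro u x hx
    have : x = sierA 0 ∨ x = sierA 1 ∨ x = sierA 2 := by simpa [V] using hx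
    rcases this with h | h | h <;> subst h <;> exact hext0_A u _
  | succ n ih =>
    intro u x hx
    rw [mem_V_succ] at hx
    obtain ⟨i, z, hz, rfl⟩ := hx
    rw [hext_compat_of_agree n ih u i z (V_mono_succ n hz), ih _ z hz]

lemma hext_compat (n : ℕ) :
    ∀ (u : Pt → ℝ) (i : Fin 3), ∀ z ∈ V (n+1),
      hext (n+1) u (ctr i z) = hext n (fun w => u (ctr i w)) z :=
  hext_compat_of_agree n (hext_agree n)

-- ===== explicit level-0 sums =====
lemma V0_eq : V 0 = ({sierA 0, sierA 1, sierA 2} : Finset Pt) := rfl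

lemma sum_V0 (g : Pt → ℝ) : ∑ x ∈ V 0, g x = g (sierA 0) + g (sierA 1) + g (sierA 2) := by
  rw [V0_eq, Finset.sum_insert (by simp [neA0A1, neA0A2]),
    Finset.sum_insert (by simp [neA1A2]), Finset.sum_singleton, add_assoc]

lemma sum_Ed0 (f : Pt × Pt → ℝ) :
    ∑ p ∈ Ed 0, f p = f (sierA 0, sierA 1) + f (sierA 0, sierA 2) + f (sierA 1, sierA 0)
      + f (sierA 1, sierA 2) + f (sierA 2, sierA 0) + f (sierA 2, sierA 1) := by
  show ∑ p ∈ (V 0 ×ˢ V 0).filter (fun p => p.1 ≠ p.2), f p = _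
  rw [Finset.sum_filter, Finset.sum_product]
  rw [sum_V0 (fun x => ∑ y ∈ V 0, if (x, y).1 ≠ (x, y).2 then f (x, y) else 0)]
  simp only []
  rw [sum_V0 (fun y => if sierA 0 ≠ y then f (sierA 0, y) else 0),
      sum_V0 (fun y => if sierA 1 ≠ y then f (sierA 1, y) else 0),
      sum_V0 (fun y => if sierA 2 ≠ y then f (sierA 2, y) else 0)]
  simp only [ne_eq, not_true_eq_false, if_neg, if_pos, neA0A1, neA0A2, neA1A2,
    neA0A1.symm, neA0A2.symm, neA1A2.symm, not_false_eq_true, if_true]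
  simp
  ring

lemma L0_eval (u : Pt → ℝ) (x : Pt) :
    L 0 u x = (if sierA 0 = x then (u (sierA 1) - u (sierA 0)) + (u (sierA 2) - u (sierA 0)) else 0)
      + (if sierA 1 = x then (u (sierA 0) - u (sierA 1)) + (u (sierA 2) - u (sierA 1)) else 0)
      + (if sierA 2 = x then (u (sierA 0) - u (sierA 2)) + (u (sierA 1) - u (sierA 2)) else 0) := by
  unfold L
  rw [Finset.sum_filter, sum_Ed0 (fun p => if p.1 = x then u p.2 - u p.1 else 0)]
  simp only []
  by_cases h0 : sierA 0 = x <;> by_cases h1 : sierA 1 = x <;> by_cases h2 : sierA 2 = x <;>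
    simp [h0, h1, h2] <;> ring

lemma cinv_eq {i : Fin 3} {z x : Pt} : (z = cinv i x) ↔ (ctr i z = x) := by
  constructor
  · rintro rfl; exact ctr_cinv i x
  · intro h; rw [← h, cinv_ctr]

lemma L1_old (u : Pt → ℝ) (i : Fin 3) : L 1 (hext 0 u) (sierA i) = (3/5) * L 0 u (sierA i) := by
  rcases fin3_cases i with rfl | rfl | rfl <;>
  · rw [L_succ, Fin.sum_univ_three]
    simp only [L0_eval, cinv_eq, tb00, tb01, tb02, tb10, tb11, tb12, tb20, tb21, tb22]
    simp only [neA0A1, neA0A2, neA1A2, neA0A1.symm, neA0A2.symm, neA1A2.symm,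
      neA0M01, neA0M02, neA0M12, neA1M01, neA1M02, neA1M12, neA2M01, neA2M02, neA2M12,
      neA0M01.symm, neA0M02.symm, neA0M12.symm, neA1M01.symm, neA1M02.symm, neA1M12.symm,
      neA2M01.symm, neA2M02.symm, neA2M12.symm,
      neM01M02, neM01M12, neM02M12, neM01M02.symm, neM01M12.symm, neM02M12.symm,
      if_true, if_false, ite_true, ite_false, ne_eq, not_false_eq_true, if_pos rfl,
      hext0_M01, hext0_M12, hext0_M02, hext0_A]
    simp [hext0_M01, hext0_M12, hext0_M02, hext0_A,
      neA0M01, neA0M02, neA0M12, neA1M01, neA1M02, neA1M12, neA2M01, neA2M02, neA2M12,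
      neA0M01.symm, neA0M02.symm, neA0M12.symm, neA1M01.symm, neA1M02.symm, neA1M12.symm,
      neA2M01.symm, neA2M02.symm, neA2M12.symm,
      neM01M02, neM01M12, neM02M12, neM01M02.symm, neM01M12.symm, neM02M12.symm,
      neA0A1, neA0A2, neA1A2, neA0A1.symm, neA0A2.symm, neA1A2.symm]
    ring

lemma L1_new (u : Pt → ℝ) {m : Pt} (hm : m = M01 ∨ m = M02 ∨ m = M12) :
    L 1 (hext 0 u) m = 0 := by
  rcases hm with rfl | rfl | rfl <;>
  · rw [L_succ, Fin.sum_univ_three]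
    simp only [L0_eval, cinv_eq, tb00, tb01, tb02, tb10, tb11, tb12, tb20, tb21, tb22]
    simp [hext0_M01, hext0_M12, hext0_M02, hext0_A,
      neA0M01, neA0M02, neA0M12, neA1M01, neA1M02, neA1M12, neA2M01, neA2M02, neA2M12,
      neA0M01.symm, neA0M02.symm, neA0M12.symm, neA1M01.symm, neA1M02.symm, neA1M12.symm,
      neA2M01.symm, neA2M02.symm, neA2M12.symm,
      neM01M02, neM01M12, neM02M12, neM01M02.symm, neM01M12.symm, neM02M12.symm,
      neA0A1, neA0A2, neA1A2, neA0A1.symm, neA0A2.symm, neA1A2.symm]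
    ring

lemma L_congr {n : ℕ} {f g : Pt → ℝ} {y : Pt} (h : ∀ z ∈ V n, f z = g z) :
    L n f y = L n g y := by
  unfold L
  refine Finset.sum_congr rfl fun p hp => ?_
  have hm := Ed_mem_V n p (Finset.mem_filter.mp hp).1
  rw [h _ hm.1, h _ hm.2]

lemma cinv_mem {n : ℕ} {i : Fin 3} {x : Pt} (hx : x ∈ V (n+1)) (h : cinv i x ∈ V (n+1)) :
    cinv i x ∈ V n := by
  rw [mem_V_succ] at hx
  obtain ⟨j, w, hw, rfl⟩ := hx
  by_cases hij : i = j
  · subst hij; rw [cinv_ctr]; exact hw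
  · have o := overlap hij (V_subset_T (n+1) _ h) (V_subset_T n w hw) (ctr_cinv i (ctr j w))
    rw [o.1]; exact sierA_mem_V n j

lemma V1_new {x : Pt} (hx : x ∈ V 1) (hx0 : x ∉ V 0) : x = M01 ∨ x = M02 ∨ x = M12 := by
  rw [mem_V_succ] at hx
  obtain ⟨i, z, hz, rfl⟩ := hx
  have hzc : z = sierA 0 ∨ z = sierA 1 ∨ z = sierA 2 := by simpa [V] using hz
  rcases fin3_cases i with rfl | rfl | rfl <;> rcases hzc with rfl | rfl | rfl <;>
    first
      | exact absurd (by rw [ctr_fix]; exact sierA_mem_V0 _) hx0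
      | exact Or.inl tb01
      | exact Or.inl tb10
      | exact Or.inr (Or.inl tb02)
      | exact Or.inr (Or.inl tb20)
      | exact Or.inr (Or.inr tb12)
      | exact Or.inr (Or.inr tb21)

lemma L_ext_old : ∀ (n : ℕ) (u : Pt → ℝ), ∀ x ∈ V n,
    L (n+1) (hext n u) x = (3/5) * L n u x := by
  intro n
  induction n with
  | zero =>
    intro u x hx
    have : x = sierA 0 ∨ x = sierA 1 ∨ x = sierA 2 := by simpa [V] using hx
    rcases this with rfl | rfl | rfl <;> exact L1_old u _
  | succ n ih =>
    intro u x hx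
    have hL : ∀ i : Fin 3, L (n+1) (fun w => hext (n+1) u (ctr i w)) (cinv i x)
        = (3/5) * L n (fun w => u (ctr i w)) (cinv i x) := by
      intro i
      rw [L_congr (fun z hz => hext_compat n u i z hz)]
      by_cases hmem : cinv i x ∈ V (n+1)
      · exact ih _ _ (cinv_mem hx hmem)
      · rw [L_empty hmem, L_empty (fun h => hmem (V_mono_succ n h)), mul_zero]
    rw [L_succ, Fin.sum_univ_three, hL 0, hL 1, hL 2, L_succ n u x, Fin.sum_univ_three]
    ring

lemma L_ext_new : ∀ (n : ℕ) (u : Pt → ℝ), ∀ x ∈ V (n+1), x ∉ V n →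
    L (n+1) (hext n u) x = 0 := by
  intro n
  induction n with
  | zero =>
    intro u x hx hx0
    exact L1_new u (V1_new hx hx0)
  | succ n ih =>
    intro u x hx hx0
    have hL : ∀ i : Fin 3, L (n+1) (fun w => hext (n+1) u (ctr i w)) (cinv i x) = 0 := by
      intro i
      rw [L_congr (fun z hz => hext_compat n u i z hz)]
      by_cases hmem : cinv i x ∈ V (n+1)
      · refine ih _ _ hmem fun h => hx0 ?_
        have := ctr_mem_V_succ i h
        rwa [ctr_cinv] at this
      · exact L_empty hmem _
    rw [L_succ, Fin.sum_univ_three, hL 0, hL 1, hL 2]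
    ring

-- ===== summation by parts and uniqueness =====
lemma Ed_swap_image (n : ℕ) : (Ed n).image Prod.swap = Ed n := by
  apply Finset.ext
  intro q
  simp only [Finset.mem_image]
  constructor
  · rintro ⟨p, hp, rfl⟩; exact Ed_symm n p hp
  · intro hq; exact ⟨q.swap, Ed_symm n q hq, by simp⟩

lemma sum_swap_Ed (n : ℕ) (f : Pt × Pt → ℝ) : ∑ p ∈ Ed n, f p.swap = ∑ p ∈ Ed n, f p := by
  conv_rhs => rw [← Ed_swap_image n]
  rw [Finset.sum_image (fun a _ b _ h => Prod.swap_injective h)]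

lemma sum_sq (n : ℕ) (u : Pt → ℝ) :
    ∑ p ∈ Ed n, (u p.2 - u p.1)^2 = -2 * ∑ x ∈ V n, u x * L n u x := by
  have h1 : ∑ p ∈ Ed n, (u p.2 - u p.1) * u p.2
      = - ∑ p ∈ Ed n, (u p.2 - u p.1) * u p.1 := by
    have := sum_swap_Ed n (fun p => (u p.2 - u p.1) * u p.1)
    rw [← this, ← Finset.sum_neg_distrib]
    refine Finset.sum_congr rfl fun p _ => ?_
    simp [Prod.swap]; ring
  have h2 : ∑ p ∈ Ed n, (u p.2 - u p.1) * u p.1 = ∑ x ∈ V n, u x * L n u x := by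
    rw [← Finset.sum_fiberwise_of_maps_to (fun p hp => (Ed_mem_V n p hp).1)
      (fun p => (u p.2 - u p.1) * u p.1)]
    refine Finset.sum_congr rfl fun x _ => ?_
    unfold L
    rw [Finset.mul_sum]
    refine Finset.sum_congr rfl fun p hp => ?_
    have hx : p.1 = x := (Finset.mem_filter.mp hp).2
    rw [hx]; ring
  have expand : ∑ p ∈ Ed n, (u p.2 - u p.1)^2
      = ∑ p ∈ Ed n, (u p.2 - u p.1) * u p.2 - ∑ p ∈ Ed n, (u p.2 - u p.1) * u p.1 := by
    rw [← Finset.sum_sub_distrib]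
    refine Finset.sum_congr rfl fun p _ => by ring
  rw [expand, h1, h2]; ring

lemma sierA_inj : Function.Injective sierA := by
  intro i j h
  rcases fin3_cases i with rfl | rfl | rfl <;> rcases fin3_cases j with rfl | rfl | rfl <;>
    first
      | rfl
      | exact absurd h neA0A1 | exact absurd h neA0A2 | exact absurd h neA1A2
      | exact absurd h.symm neA0A1 | exact absurd h.symm neA0A2 | exact absurd h.symm neA1A2

lemma Ed0_mem {i j : Fin 3} (hij : i ≠ j) : (sierA i, sierA j) ∈ Ed 0 := by
  refine Finset.mem_filter.mpr ⟨Finset.mem_product.mpr ⟨sierA_mem_V0 i, sierA_mem_V0 j⟩, ?_⟩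
  exact fun h => hij (sierA_inj h)

lemma edge_mem_succ {n : ℕ} {p : Pt × Pt} (hp : p ∈ Ed n) (i : Fin 3) :
    (ctr i p.1, ctr i p.2) ∈ Ed (n+1) := by
  show _ ∈ Finset.biUnion _ _
  exact Finset.mem_biUnion.mpr ⟨i, Finset.mem_univ i, Finset.mem_image.mpr ⟨p, hp, rfl⟩⟩

lemma const_on : ∀ (n : ℕ) (u : Pt → ℝ), (∀ p ∈ Ed n, u p.2 = u p.1) →
    ∀ x ∈ V n, u x = u (sierA 0) := by
  intro n
  induction n with
  | zero =>
    intro u h x hx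
    have : x = sierA 0 ∨ x = sierA 1 ∨ x = sierA 2 := by simpa [V] using hx
    rcases this with rfl | rfl | rfl
    · rfl
    · exact h (sierA 0, sierA 1) (Ed0_mem (by decide))
    · exact h (sierA 0, sierA 2) (Ed0_mem (by decide))
  | succ n ih =>
    intro u h x hx
    have hcell : ∀ i : Fin 3, ∀ z ∈ V n, u (ctr i z) = u (ctr i (sierA 0)) :=
      fun i => ih (fun w => u (ctr i w)) (fun p hp => h _ (edge_mem_succ hp i))
    have hA : ∀ i : Fin 3, u (ctr i (sierA 0)) = u (sierA 0) := by
      intro i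
      rw [ctr_comm i 0, hcell 0 (sierA i) (sierA_mem_V n i), ctr_fix]
    obtain ⟨i, z, hz, rfl⟩ := mem_V_succ.mp hx
    rw [hcell i z hz, hA i]

lemma uniqZero (n : ℕ) (u : Pt → ℝ) (hb : ∀ i : Fin 3, u (sierA i) = 0)
    (hl : ∀ x ∈ V n, x ∉ V 0 → L n u x = 0) : ∀ x ∈ V n, u x = 0 := by
  have hsum0 : ∑ x ∈ V n, u x * L n u x = 0 := by
    refine Finset.sum_eq_zero fun x hx => ?_
    by_cases h0 : x ∈ V 0
    · have : x = sierA 0 ∨ x = sierA 1 ∨ x = sierA 2 := by simpa [V] using h0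
      rcases this with rfl | rfl | rfl <;> rw [hb] <;> ring
    · rw [hl x hx h0]; ring
  have hzero : ∑ p ∈ Ed n, (u p.2 - u p.1)^2 = 0 := by rw [sum_sq, hsum0]; ring
  have hedge : ∀ p ∈ Ed n, u p.2 = u p.1 := by
    intro p hp
    have := (Finset.sum_eq_zero_iff_of_nonneg (fun p _ => sq_nonneg (u p.2 - u p.1))).mp hzero p hp
    have h2 := pow_eq_zero_iff (n := 2) (by norm_num) |>.mp this
    linarith [h2]
  intro x hx
  rw [const_on n u hedge x hx, hb 0]

lemma L_sub (n : ℕ) (f g : Pt → ℝ) (x : Pt) :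
    L n (fun z => f z - g z) x = L n f x - L n g x := by
  unfold L
  rw [← Finset.sum_sub_distrib]
  exact Finset.sum_congr rfl fun p _ => by ring

/-- Consistency of the Green functions across levels: for `y ∈ V_n ∖ V₀`,
the level-`(n+1)` Green function with pole at `y` agrees with the level-`n`
one on `V_n`. -/
theorem green_consistent (n : ℕ) (hn : 1 ≤ n)
    (y : Pt) (hy : y ∈ (V n : Set Pt)) (hy0 : y ∉ (V 0 : Set Pt))
    (g g' : Pt → ℝ) (hg : IsGreen n y g) (hg' : IsGreen (n + 1) y g') :
    ∀ x ∈ (V n : Set Pt), g' x = g x := by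
  obtain ⟨hg1, hg2, hg3⟩ := hg
  obtain ⟨hg'1, hg'2, hg'3⟩ := hg'
  have hyV : y ∈ V n := hy
  set G : Pt → ℝ := hext n g with hGdef
  have hGagree : ∀ x ∈ V n, G x = g x := fun x hx => hext_agree n g x hx
  have h5 : ((5:ℝ)^(n+1)) ≠ 0 := by positivity
  have hlapG_old : ∀ x ∈ V n, lap (n+1) G x = 3 * lap n g x := by
    intro x hx
    rw [lap_eq, lap_eq, L_ext_old n g x hx, pow_succ]
    ring
  have hLdiff : ∀ x ∈ V (n+1), x ∉ V 0 → L (n+1) (fun z => g' z - G z) x = 0 := by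
    intro x hx hx0
    have hEq : lap (n+1) g' x = lap (n+1) G x := by
      by_cases hxy : x = y
      · subst hxy
        rw [hg'1, hlapG_old x hyV, hg1, pow_succ]
        ring
      · rw [hg'2 x (Finset.mem_coe.mpr hx) (fun h => hx0 (Finset.mem_coe.mp h)) hxy]
        by_cases hxn : x ∈ V n
        · rw [hlapG_old x hxn,
            hg2 x (Finset.mem_coe.mpr hxn) (fun h => hx0 (Finset.mem_coe.mp h)) hxy]
          ring
        · rw [lap_eq, L_ext_new n g x hx hxn, mul_zero]
    have hz : (5:ℝ)^(n+1) * L (n+1) (fun z => g' z - G z) x = 0 := by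
      rw [L_sub, mul_sub, ← lap_eq, ← lap_eq, hEq]; ring
    exact (mul_eq_zero.mp hz).resolve_left h5
  have hbd : ∀ i : Fin 3, g' (sierA i) - G (sierA i) = 0 := by
    intro i
    rw [hg'3 i, hGagree _ (sierA_mem_V n i), hg3 i]; ring
  intro x hx
  have hxn : x ∈ V n := hx
  have hdz := uniqZero (n+1) (fun z => g' z - G z) hbd hLdiff x (V_mono_succ n hxn)
  have hgx := hGagree x hxn
  linarith [hdz, hgx]

end
end

section
/- The Green functions satisfy the self-similar recursion: for every n ≥ 1, every i ∈ {0,1,2} and all x, y ∈ V_n, G_{n+1}(φ_i(x), φ_i(y)) = (3/5)·G_n(x,y) + Σ_{j=0,1,2} h_n^j(y) · G_{n+1}(φ_i(x), φ_i(a_j)), where h_n^j : V_n → ℝ is the unique function satisfying Δ_n h_n^j(z) = 0 for all z ∈ V_n∖V₀ and h_n^j(a_k) = δ_{jk} for k = 0,1,2. -/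
open scoped Classical
open Real Set

noncomputable section

/-- `G` is the full level-`n` Green function `G_n(x,y)`: for each pole
`y ∈ V_n ∖ V₀`, `G(·,y)` solves the discrete Dirichlet problem, and by
convention `G(·,y) = 0` for `y ∈ V₀`. -/
def IsGreenFamily (n : ℕ) (G : Pt → Pt → ℝ) : Prop :=
  (∀ y ∈ (V n : Set Pt), y ∉ (V 0 : Set Pt) → IsGreen n y (fun x => G x y)) ∧
  ∀ y ∈ (V 0 : Set Pt), ∀ x : Pt, G x y = 0

/-- `h j` is the level-`n` harmonic function with boundary values
`h_n^j(a_k) = δ_{jk}`. -/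
def IsHarmBasis (n : ℕ) (h : Fin 3 → Pt → ℝ) : Prop :=
  ∀ j : Fin 3,
    (∀ x ∈ (V n : Set Pt), x ∉ (V 0 : Set Pt) → lap n (h j) x = 0) ∧
    ∀ k : Fin 3, h j (sierA k) = if j = k then 1 else 0

namespace SG

lemma sqrt3_pos : (0:ℝ) < Real.sqrt 3 := Real.sqrt_pos.mpr (by norm_num)
lemma sqrt3_ne : (Real.sqrt 3) ≠ 0 := ne_of_gt sqrt3_pos

def lam : Fin 3 → Pt → ℝ
  | 0, p => Real.sqrt 3 * (1 - p.1) - p.2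
  | 1, p => 2 * p.2
  | 2, p => Real.sqrt 3 * p.1 - p.2

lemma lam_sierA (k m : Fin 3) : lam k (sierA m) = if k = m then Real.sqrt 3 else 0 := by
  fin_cases k <;> fin_cases m <;> simp [lam, sierA] <;> ring

lemma lam_sum (p : Pt) : lam 0 p + lam 1 p + lam 2 p = Real.sqrt 3 := by
  simp [lam]; ring

lemma lam_ctr (k i : Fin 3) (x : Pt) :
    lam k (ctr i x) = (lam k x + lam k (sierA i)) / 2 := by
  fin_cases k <;> simp [lam, ctr] <;> ring

lemma fin3 (k : Fin 3) : k = 0 ∨ k = 1 ∨ k = 2 := by fin_cases k <;> simp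

lemma lam_sierA_nonneg (k m : Fin 3) : 0 ≤ lam k (sierA m) := by
  rw [lam_sierA]; split
  · exact sqrt3_pos.le
  · exact le_rfl

lemma mem_V_succ {n : ℕ} {x : Pt} :
    x ∈ V (n+1) ↔ ∃ i : Fin 3, ∃ z ∈ V n, ctr i z = x := by
  constructor
  · intro hx
    simp [V] at hx
    rcases hx with ⟨a, b, hz, he⟩ | ⟨a, b, hz, he⟩ | ⟨a, b, hz, he⟩
    exacts [⟨0, (a,b), hz, he⟩, ⟨1, (a,b), hz, he⟩, ⟨2, (a,b), hz, he⟩]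
  · rintro ⟨i, z, hz, rfl⟩
    rcases fin3 i with rfl|rfl|rfl <;> simp [V]
    · exact Or.inl ⟨z.1, z.2, hz, rfl⟩
    · exact Or.inr (Or.inl ⟨z.1, z.2, hz, rfl⟩)
    · exact Or.inr (Or.inr ⟨z.1, z.2, hz, rfl⟩)

lemma mem_V0 {x : Pt} : x ∈ V 0 ↔ x = sierA 0 ∨ x = sierA 1 ∨ x = sierA 2 := by
  simp [V]

lemma ctr_mem {n : ℕ} {z : Pt} (i : Fin 3) (hz : z ∈ V n) : ctr i z ∈ V (n+1) :=
  mem_V_succ.mpr ⟨i, z, hz, rfl⟩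

lemma lam_nonneg {n : ℕ} {x : Pt} (hx : x ∈ V n) (k : Fin 3) : 0 ≤ lam k x := by
  induction n generalizing x with
  | zero =>
    simp [V] at hx
    rcases hx with h | h | h <;> subst h <;> exact lam_sierA_nonneg k _
  | succ n ih =>
    rcases mem_V_succ.mp hx with ⟨i, z, hz, rfl⟩
    · rw [lam_ctr]
      have h1 := ih hz
      have h2 := lam_sierA_nonneg k i
      linarith

lemma lam_le {n : ℕ} {x : Pt} (hx : x ∈ V n) (k : Fin 3) : lam k x ≤ Real.sqrt 3 := by
  have hs := lam_sum x
  have h0 := lam_nonneg hx 0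
  have h1 := lam_nonneg hx 1
  have h2 := lam_nonneg hx 2
  rcases fin3 k with rfl|rfl|rfl <;> linarith

lemma pt_ext {p q : Pt} (h1 : lam 1 p = lam 1 q) (h2 : lam 2 p = lam 2 q) : p = q := by
  simp [lam] at h1 h2
  have hy : p.2 = q.2 := by linarith
  have hx : p.1 = q.1 := by
    have : Real.sqrt 3 * p.1 = Real.sqrt 3 * q.1 := by linarith
    exact mul_left_cancel₀ sqrt3_ne this
  exact Prod.ext hx hy

lemma eq_sierA_of_lam {n : ℕ} {q : Pt} {i : Fin 3} (hq : q ∈ V n)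
    (h : lam i q = Real.sqrt 3) : q = sierA i := by
  have hs := lam_sum q
  have h0 := lam_nonneg hq 0
  have h1 := lam_nonneg hq 1
  have h2 := lam_nonneg hq 2
  have h0 := lam_nonneg hq 0
  have h1 := lam_nonneg hq 1
  have h2 := lam_nonneg hq 2
  rcases fin3 i with rfl|rfl|rfl <;>
    [skip; skip; skip] <;>
    (apply pt_ext <;> rw [lam_sierA] <;> simp_all <;> linarith)

lemma ctr_fix (k : Fin 3) : ctr k (sierA k) = sierA k := by
  simp [ctr]

lemma sierA_mem_V (k : Fin 3) (n : ℕ) : sierA k ∈ V n := by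
  induction n with
  | zero => rcases fin3 k with rfl|rfl|rfl <;> simp [V]
  | succ n ih => exact (ctr_fix k) ▸ ctr_mem k ih

lemma ctr_inj (i : Fin 3) : Function.Injective (ctr i) := by
  intro p q h
  simp [ctr] at h
  exact Prod.ext (by linarith [h.1]) (by linarith [h.2])

lemma sierA_inj : Function.Injective sierA := by
  intro k m h
  rcases fin3 k with rfl|rfl|rfl <;> rcases fin3 m with rfl|rfl|rfl <;>
    first
    | rfl
    | (exfalso; have := congrArg Prod.fst h; norm_num [sierA] at this)

lemma cell_sep {n : ℕ} {i j : Fin 3} {x y : Pt} (hij : i ≠ j)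
    (hx : x ∈ V n) (hy : y ∈ V n) (h : ctr i x = ctr j y) :
    x = sierA j ∧ y = sierA i := by
  have h1 : x.1 + (sierA i).1 = y.1 + (sierA j).1 := by
    have := congrArg Prod.fst h; simp [ctr] at this; linarith
  have h2 : x.2 + (sierA i).2 = y.2 + (sierA j).2 := by
    have := congrArg Prod.snd h; simp [ctr] at this; linarith
  have key : ∀ k : Fin 3, lam k x + lam k (sierA i) = lam k y + lam k (sierA j) := by
    intro k
    rcases fin3 k with rfl|rfl|rfl <;> simp only [lam]
    · linear_combination (-Real.sqrt 3) * h1 - h2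
    · linear_combination 2 * h2
    · linear_combination Real.sqrt 3 * h1 - h2
  have hii := key i
  rw [lam_sierA i i, lam_sierA i j, if_pos rfl, if_neg hij] at hii
  -- lam i x + √3 = lam i y + 0
  have hxle := lam_nonneg hx i
  have hyle := lam_le hy i
  have hxz : lam i x = 0 := by linarith
  have hyz : lam i y = Real.sqrt 3 := by linarith
  have hy_eq : y = sierA i := eq_sierA_of_lam hy hyz
  refine ⟨?_, hy_eq⟩
  subst hy_eq
  apply Prod.ext
  · have := lam_sierA i i; linarith [h1]
  · linarith [h2]

lemma ctr_eq_sierA {n : ℕ} {x : Pt} {i k : Fin 3} (hx : x ∈ V n)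
    (h : ctr i x = sierA k) : x = sierA i ∧ k = i := by
  by_cases hik : k = i
  · subst hik
    exact ⟨ctr_inj _ (h.trans (ctr_fix _).symm), rfl⟩
  · exfalso
    have hk : ctr i x = ctr k (sierA k) := by rw [ctr_fix]; exact h
    have := cell_sep (fun hh : i = k => hik hh.symm) hx (sierA_mem_V k n) hk
    exact hik (sierA_inj this.2)

lemma ctr_not_V0 {n : ℕ} {x : Pt} {i : Fin 3} (hx : x ∈ V n) (hx0 : x ∉ V 0) :
    ctr i x ∉ V 0 := by
  intro hc
  rcases mem_V0.mp hc with h|h|h <;>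
  · rcases ctr_eq_sierA hx h with ⟨rfl, _⟩
    exact hx0 (sierA_mem_V i 0)


lemma ed_mem {n : ℕ} {p : Pt × Pt} (hp : p ∈ Ed n) : p.1 ∈ V n ∧ p.2 ∈ V n := by
  induction n generalizing p with
  | zero =>
    rw [Ed] at hp
    rcases Finset.mem_filter.mp hp with ⟨hm, _⟩
    exact ⟨(Finset.mem_product.mp hm).1, (Finset.mem_product.mp hm).2⟩
  | succ n ih =>
    rw [Ed] at hp
    rcases Finset.mem_biUnion.mp hp with ⟨i, _, hi⟩
    rcases Finset.mem_image.mp hi with ⟨q, hq, rfl⟩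
    exact ⟨ctr_mem i (ih hq).1, ctr_mem i (ih hq).2⟩

lemma ed_swap {n : ℕ} {p : Pt × Pt} (hp : p ∈ Ed n) : (p.2, p.1) ∈ Ed n := by
  induction n generalizing p with
  | zero =>
    rw [Ed] at hp ⊢
    rcases Finset.mem_filter.mp hp with ⟨hm, hne⟩
    rcases Finset.mem_product.mp hm with ⟨h1, h2⟩
    exact Finset.mem_filter.mpr ⟨Finset.mem_product.mpr ⟨h2, h1⟩, fun h => hne h.symm⟩
  | succ n ih =>
    rw [Ed] at hp ⊢
    rcases Finset.mem_biUnion.mp hp with ⟨i, hiu, hi⟩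
    rcases Finset.mem_image.mp hi with ⟨q, hq, rfl⟩
    exact Finset.mem_biUnion.mpr ⟨i, hiu, Finset.mem_image.mpr ⟨(q.2, q.1), ih hq, rfl⟩⟩

lemma ed_ctr_mem {n : ℕ} {q : Pt × Pt} (i : Fin 3) (hq : q ∈ Ed n) :
    (ctr i q.1, ctr i q.2) ∈ Ed (n+1) := by
  rw [Ed]
  exact Finset.mem_biUnion.mpr ⟨i, Finset.mem_univ i, Finset.mem_image.mpr ⟨q, hq, rfl⟩⟩

lemma filter_ed_ctr {n : ℕ} {x : Pt} (i : Fin 3) (hx : x ∈ V n) (hx0 : x ∉ V 0) :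
    (Ed (n+1)).filter (fun p => p.1 = ctr i x)
      = ((Ed n).filter (fun p => p.1 = x)).image (fun q => (ctr i q.1, ctr i q.2)) := by
  ext p
  simp only [Finset.mem_filter, Finset.mem_image]
  constructor
  · rintro ⟨hp, hp1⟩
    rw [Ed] at hp
    rcases Finset.mem_biUnion.mp hp with ⟨j, _, hj⟩
    rcases Finset.mem_image.mp hj with ⟨q, hq, rfl⟩
    simp only at hp1
    by_cases hji : j = i
    · subst hji
      have : q.1 = x := ctr_inj j hp1
      exact ⟨q, ⟨hq, this⟩, by rw [this]⟩
    · exfalso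
      have := (cell_sep hji (ed_mem hq).1 hx hp1).2
      exact hx0 (this ▸ sierA_mem_V j 0)
  · rintro ⟨q, ⟨hq, hq1⟩, rfl⟩
    exact ⟨ed_ctr_mem i hq, by rw [hq1]⟩

lemma lap_ctr {n : ℕ} {x : Pt} (i : Fin 3) (hx : x ∈ V n) (hx0 : x ∉ V 0) (u : Pt → ℝ) :
    lap (n+1) u (ctr i x) = 5 * lap n (fun z => u (ctr i z)) x := by
  rw [lap, lap, filter_ed_ctr i hx hx0, Finset.sum_image, pow_succ]
  · ring
  · intro p _ q _ h
    have h1 := ctr_inj i (congrArg Prod.fst h)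
    have h2 := ctr_inj i (congrArg Prod.snd h)
    exact Prod.ext h1 h2

lemma lap_sub (n : ℕ) (f g : Pt → ℝ) (x : Pt) :
    lap n (fun z => f z - g z) x = lap n f x - lap n g x := by
  rw [lap, lap, lap, ← mul_sub, ← Finset.sum_sub_distrib]
  congr 1
  apply Finset.sum_congr rfl
  intros; ring

lemma lap_sum3 (n : ℕ) (f : Fin 3 → Pt → ℝ) (x : Pt) :
    lap n (fun z => ∑ j : Fin 3, f j z) x = ∑ j : Fin 3, lap n (f j) x := by
  simp only [lap, ← Finset.mul_sum]
  congr 1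
  rw [Finset.sum_comm]
  apply Finset.sum_congr rfl
  intros; rw [← Finset.sum_sub_distrib]

lemma lap_const_mul (n : ℕ) (c : ℝ) (f : Pt → ℝ) (x : Pt) :
    lap n (fun z => c * f z) x = c * lap n f x := by
  rw [lap, lap]
  rw [show (∑ p ∈ (Ed n).filter (fun p => p.1 = x), (c * f p.2 - c * f p.1))
      = c * ∑ p ∈ (Ed n).filter (fun p => p.1 = x), (f p.2 - f p.1) by
    rw [Finset.mul_sum]; apply Finset.sum_congr rfl; intros; ring]
  ring

lemma lap_zero_fun (n : ℕ) (x : Pt) : lap n (fun _ => (0:ℝ)) x = 0 := by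
  simp [lap]


lemma sum_mul_lap (n : ℕ) (u v : Pt → ℝ) :
    ∑ x ∈ V n, u x * lap n v x = 5 ^ n * ∑ p ∈ Ed n, u p.1 * (v p.2 - v p.1) := by
  rw [Finset.mul_sum,
    ← Finset.sum_fiberwise_of_maps_to (g := Prod.fst) (fun p hp => (ed_mem hp).1)
      (fun p => (5:ℝ) ^ n * (u p.1 * (v p.2 - v p.1)))]
  apply Finset.sum_congr rfl
  intro x hx
  rw [lap, ← mul_assoc, mul_comm (u x), mul_assoc, Finset.mul_sum, Finset.mul_sum]
  apply Finset.sum_congr rfl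
  intro p hp
  rw [(Finset.mem_filter.mp hp).2]

lemma sum_swap_ed (n : ℕ) (F : Pt → Pt → ℝ) :
    ∑ p ∈ Ed n, F p.1 p.2 = ∑ p ∈ Ed n, F p.2 p.1 := by
  refine Finset.sum_nbij' (fun p => (p.2, p.1)) (fun p => (p.2, p.1)) ?_ ?_ ?_ ?_ ?_
  · intro p hp; exact ed_swap hp
  · intro p hp; exact ed_swap hp
  · intro p hp; simp
  · intro p hp; simp
  · intro p hp; rfl

lemma gauss_green (n : ℕ) (u v : Pt → ℝ) :
    ∑ x ∈ V n, u x * lap n v x = ∑ x ∈ V n, v x * lap n u x := by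
  rw [sum_mul_lap, sum_mul_lap]
  congr 1
  have h1 : ∑ p ∈ Ed n, u p.1 * v p.2 = ∑ p ∈ Ed n, v p.1 * u p.2 := by
    rw [sum_swap_ed n (fun a b => u a * v b)]
    apply Finset.sum_congr rfl; intros; ring
  have e1 : ∑ p ∈ Ed n, u p.1 * (v p.2 - v p.1)
      = (∑ p ∈ Ed n, u p.1 * v p.2) - ∑ p ∈ Ed n, u p.1 * v p.1 := by
    rw [← Finset.sum_sub_distrib]; apply Finset.sum_congr rfl; intros; ring
  have e2 : ∑ p ∈ Ed n, v p.1 * (u p.2 - u p.1)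
      = (∑ p ∈ Ed n, v p.1 * u p.2) - ∑ p ∈ Ed n, v p.1 * u p.1 := by
    rw [← Finset.sum_sub_distrib]; apply Finset.sum_congr rfl; intros; ring
  rw [e1, e2, h1]
  congr 1
  apply Finset.sum_congr rfl; intros; ring

lemma ed0_mem {k m : Fin 3} (hkm : k ≠ m) : (sierA k, sierA m) ∈ Ed 0 := by
  rw [Ed]
  refine Finset.mem_filter.mpr ⟨Finset.mem_product.mpr ⟨?_, ?_⟩, ?_⟩
  · exact sierA_mem_V k 0
  · exact sierA_mem_V m 0
  · exact fun he => hkm (sierA_inj he)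

lemma ctr10 : ctr 1 (sierA 0) = ctr 0 (sierA 1) := by
  simp [ctr, sierA]

lemma ctr20 : ctr 2 (sierA 0) = ctr 0 (sierA 2) := by
  simp [ctr, sierA]

lemma edge_const (n : ℕ) : ∀ u : Pt → ℝ, (∀ p ∈ Ed n, u p.1 = u p.2) →
    ∀ x ∈ V n, u x = u (sierA 0) := by
  induction n with
  | zero =>
    intro u h x hx
    rcases mem_V0.mp hx with rfl|rfl|rfl
    · rfl
    · exact (h (sierA 0, sierA 1) (ed0_mem (by decide))).symm
    · exact (h (sierA 0, sierA 2) (ed0_mem (by decide))).symm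
  | succ n ih =>
    intro u h x hx
    rcases mem_V_succ.mp hx with ⟨i, z, hz, rfl⟩
    have hcell : ∀ j : Fin 3, ∀ w ∈ V n, u (ctr j w) = u (ctr j (sierA 0)) := by
      intro j
      exact ih (fun w => u (ctr j w)) (fun q hq => h (ctr j q.1, ctr j q.2) (ed_ctr_mem j hq))
    have hx1 := hcell i z hz
    rcases fin3 i with rfl|rfl|rfl
    · rw [hx1, ctr_fix]
    · rw [hx1, ctr10, hcell 0 (sierA 1) (sierA_mem_V 1 n), ctr_fix]
    · rw [hx1, ctr20, hcell 0 (sierA 2) (sierA_mem_V 2 n), ctr_fix]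

lemma harm_zero {n : ℕ} {u : Pt → ℝ} (h0 : ∀ k : Fin 3, u (sierA k) = 0)
    (hh : ∀ x ∈ V n, x ∉ V 0 → lap n u x = 0) : ∀ x ∈ V n, u x = 0 := by
  have hsum : ∑ x ∈ V n, u x * lap n u x = 0 := by
    apply Finset.sum_eq_zero
    intro x hx
    by_cases hx0 : x ∈ V 0
    · rcases mem_V0.mp hx0 with rfl|rfl|rfl <;> rw [h0] <;> ring
    · rw [hh x hx hx0]; ring
  rw [sum_mul_lap] at hsum
  have h5 : (0:ℝ) < 5 ^ n := by positivity
  have hsum2 : ∑ p ∈ Ed n, u p.1 * (u p.2 - u p.1) = 0 := by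
    rcases mul_eq_zero.mp hsum with h|h
    · exact absurd h (ne_of_gt h5)
    · exact h
  have hsq : ∑ p ∈ Ed n, (u p.2 - u p.1)^2 = 0 := by
    have hswap : ∑ p ∈ Ed n, (u p.2)^2 = ∑ p ∈ Ed n, (u p.1)^2 :=
      sum_swap_ed n (fun a b => (u b)^2)
    have e : ∑ p ∈ Ed n, (u p.2 - u p.1)^2
        = ((∑ p ∈ Ed n, (u p.2)^2) - (∑ p ∈ Ed n, (u p.1)^2))
          - 2 * ∑ p ∈ Ed n, u p.1 * (u p.2 - u p.1) := by
      rw [Finset.mul_sum, ← Finset.sum_sub_distrib, ← Finset.sum_sub_distrib]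
      apply Finset.sum_congr rfl; intros; ring
    rw [e, hswap, hsum2]; ring
  have hedge : ∀ p ∈ Ed n, u p.1 = u p.2 := by
    intro p hp
    have h1 := (Finset.sum_eq_zero_iff_of_nonneg (fun p _ => sq_nonneg _)).mp hsq p hp
    have h2 : u p.2 - u p.1 = 0 := by
      have := sq_eq_zero_iff.mp h1
      linarith [this]
    linarith
  intro x hx
  rw [edge_const n u hedge x hx, h0 0]


lemma lap_expand (n : ℕ) (A B C : Pt → ℝ) (w : Pt) :
    lap n (fun z => A z - B z - C z) w = lap n A w - lap n B w - lap n C w := by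
  simp only [lap]
  rw [← mul_sub, ← mul_sub, ← Finset.sum_sub_distrib, ← Finset.sum_sub_distrib]
  congr 1
  apply Finset.sum_congr rfl
  intros; ring

lemma lap_lin3 (n : ℕ) (c : Fin 3 → ℝ) (h : Fin 3 → Pt → ℝ) (w : Pt) :
    lap n (fun z => ∑ j : Fin 3, c j * h j z) w = ∑ j : Fin 3, c j * lap n (h j) w := by
  have key : ∀ p : Pt × Pt, (∑ j : Fin 3, c j * h j p.2) - (∑ j : Fin 3, c j * h j p.1)
      = ∑ j : Fin 3, c j * (h j p.2 - h j p.1) := by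
    intro p; rw [← Finset.sum_sub_distrib]; apply Finset.sum_congr rfl; intros; ring
  simp only [lap, key]
  rw [Finset.sum_comm, Finset.mul_sum]
  apply Finset.sum_congr rfl
  intro j _
  rw [← Finset.mul_sum]
  ring

lemma ctr_notV0' {n : ℕ} {x : Pt} {i : Fin 3} (hx : x ∈ V n) (hxi : x ≠ sierA i) :
    ctr i x ∉ V 0 := by
  intro hc
  rcases mem_V0.mp hc with hsk|hsk|hsk <;> exact hxi (ctr_eq_sierA hx hsk).1

lemma green_symm {n : ℕ} {G : Pt → Pt → ℝ} (hG : IsGreenFamily n G)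
    {x y : Pt} (hx : x ∈ V n) (hy : y ∈ V n) : G x y = G y x := by
  have bdry : ∀ z w : Pt, z ∈ V 0 → w ∈ V n → G z w = 0 := by
    intro z w hz0 hwm
    by_cases hw0 : w ∈ V 0
    · exact hG.2 w (Finset.mem_coe.mpr hw0) z
    · have gw := hG.1 w (Finset.mem_coe.mpr hwm) (fun hc => hw0 (Finset.mem_coe.mp hc))
      rcases mem_V0.mp hz0 with rfl|rfl|rfl
      exacts [gw.2.2 0, gw.2.2 1, gw.2.2 2]
  by_cases hx0 : x ∈ V 0
  · rw [bdry x y hx0 hy, hG.2 x (Finset.mem_coe.mpr hx0) y]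
  by_cases hy0 : y ∈ V 0
  · rw [bdry y x hy0 hx, hG.2 y (Finset.mem_coe.mpr hy0) x]
  have gx := hG.1 x (Finset.mem_coe.mpr hx) (fun hc => hx0 (Finset.mem_coe.mp hc))
  have gy := hG.1 y (Finset.mem_coe.mpr hy) (fun hc => hy0 (Finset.mem_coe.mp hc))
  have A1 : ∑ z ∈ V n, G z x * lap n (fun w => G w y) z = G y x * (-(3:ℝ)^n) := by
    rw [Finset.sum_eq_single_of_mem y hy]
    · rw [gy.1]
    · intro z hz hzy
      by_cases hz0 : z ∈ V 0
      · rw [bdry z x hz0 hx]; ring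
      · rw [gy.2.1 z (Finset.mem_coe.mpr hz) (fun hc => hz0 (Finset.mem_coe.mp hc)) hzy]
        ring
  have A2 : ∑ z ∈ V n, G z y * lap n (fun w => G w x) z = G x y * (-(3:ℝ)^n) := by
    rw [Finset.sum_eq_single_of_mem x hx]
    · rw [gx.1]
    · intro z hz hzx
      by_cases hz0 : z ∈ V 0
      · rw [bdry z y hz0 hy]; ring
      · rw [gx.2.1 z (Finset.mem_coe.mpr hz) (fun hc => hz0 (Finset.mem_coe.mp hc)) hzx]
        ring
  have hgg := gauss_green n (fun z => G z x) (fun z => G z y)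
  rw [A1, A2] at hgg
  have h3 : (-(3:ℝ)^n) ≠ 0 := by
    have : (0:ℝ) < 3 ^ n := by positivity
    intro hcon; rw [neg_eq_zero] at hcon; linarith
  exact (mul_right_cancel₀ h3 hgg).symm


lemma green_bdry {n : ℕ} {G : Pt → Pt → ℝ} (hG : IsGreenFamily n G)
    {z w : Pt} (hz0 : z ∈ V 0) (hwm : w ∈ V n) : G z w = 0 := by
  by_cases hw0 : w ∈ V 0
  · exact hG.2 w (Finset.mem_coe.mpr hw0) z
  · have gw := hG.1 w (Finset.mem_coe.mpr hwm) (fun hc => hw0 (Finset.mem_coe.mp hc))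
    rcases mem_V0.mp hz0 with rfl|rfl|rfl
    exacts [gw.2.2 0, gw.2.2 1, gw.2.2 2]

lemma main_identity {n : ℕ} {G Gs : Pt → Pt → ℝ} {h : Fin 3 → Pt → ℝ}
    (hG : IsGreenFamily n G) (hGs : IsGreenFamily (n+1) Gs) (hh : IsHarmBasis n h)
    (i : Fin 3) {x : Pt} (hx : x ∈ V n) :
    ∀ z ∈ V n, Gs (ctr i z) (ctr i x)
      = (∑ j : Fin 3, Gs (ctr i (sierA j)) (ctr i x) * h j z) + (3/5) * G z x := by
  set c : Fin 3 → ℝ := fun j => Gs (ctr i (sierA j)) (ctr i x) with hc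
  set A : Pt → ℝ := fun z => Gs (ctr i z) (ctr i x) with hA
  set B : Pt → ℝ := fun z => ∑ j : Fin 3, c j * h j z with hB
  set C : Pt → ℝ := fun z => 3/5 * G z x with hC
  suffices hz : ∀ z ∈ V n, A z - B z - C z = 0 by
    intro z hzm
    have hz' := hz z hzm
    simp only [hA, hB, hC, hc] at hz'
    linarith
  apply harm_zero (u := fun z => A z - B z - C z)
  · -- boundary values
    intro k
    have hBk : B (sierA k) = c k := by
      rw [hB]
      have key : ∀ j : Fin 3, c j * h j (sierA k) = if j = k then c j else 0 := by
        intro j; rw [(hh j).2 k]; split <;> simp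
      simp only [key]
      simp
    have hCk : C (sierA k) = 0 := by
      rw [hC]
      simp only []
      rw [green_bdry hG (mem_V0.mpr (by rcases fin3 k with rfl|rfl|rfl <;> simp)) hx]
      ring
    show A (sierA k) - B (sierA k) - C (sierA k) = 0
    rw [hBk, hCk, hA, hc]
    ring
  · -- harmonicity
    intro w hw hw0
    have hwm' : ctr i w ∈ V (n+1) := ctr_mem i hw
    have hwm0' : ctr i w ∉ V 0 := ctr_not_V0 hw hw0
    rw [lap_expand]
    have hBlap : lap n B w = 0 := by
      rw [hB, lap_lin3]
      apply Finset.sum_eq_zero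
      intro j _
      rw [(hh j).1 w (Finset.mem_coe.mpr hw) (fun hcc => hw0 (Finset.mem_coe.mp hcc))]
      ring
    have hAlap5 : lap (n+1) (fun p => Gs p (ctr i x)) (ctr i w) = 5 * lap n A w :=
      lap_ctr i hw hw0 (fun p => Gs p (ctr i x))
    by_cases hx0 : x ∈ V 0
    · -- G (· , x) ≡ 0 and no pole in the cell at an interior point
      have hClap : lap n C w = 0 := by
        have : C = fun _ => (0:ℝ) := by
          funext z
          rw [hC]
          simp only []
          rw [hG.2 x (Finset.mem_coe.mpr hx0) z]
          ring
        rw [this, lap_zero_fun]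
      by_cases hxi : x = sierA i
      · have hGs0 : (fun p => Gs p (ctr i x)) = fun _ => (0:ℝ) := by
          funext p
          subst hxi
          rw [ctr_fix]
          exact hGs.2 (sierA i) (Finset.mem_coe.mpr (mem_V0.mpr
            (by rcases fin3 i with rfl|rfl|rfl <;> simp))) p
        have hAlap : lap n A w = 0 := by
          have h5 : 5 * lap n A w = 0 := by
            rw [← hAlap5, hGs0, lap_zero_fun]
          linarith
        rw [hAlap, hBlap, hClap]; ring
      · have hpole0 : ctr i x ∉ V 0 := ctr_notV0' hx hxi
        have gs := hGs.1 (ctr i x) (Finset.mem_coe.mpr (ctr_mem i hx))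
          (fun hcc => hpole0 (Finset.mem_coe.mp hcc))
        have hne : ctr i w ≠ ctr i x := by
          intro hcon
          exact hw0 ((ctr_inj i hcon) ▸ hx0)
        have hAlap : lap n A w = 0 := by
          have h5 : 5 * lap n A w = 0 := by
            rw [← hAlap5]
            exact gs.2.1 (ctr i w) (Finset.mem_coe.mpr hwm')
              (fun hcc => hwm0' (Finset.mem_coe.mp hcc)) hne
          linarith
        rw [hAlap, hBlap, hClap]; ring
    · -- x interior: pole at ctr i x
      have hpole0 : ctr i x ∉ V 0 := ctr_not_V0 hx hx0
      have gs := hGs.1 (ctr i x) (Finset.mem_coe.mpr (ctr_mem i hx))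
        (fun hcc => hpole0 (Finset.mem_coe.mp hcc))
      have gG := hG.1 x (Finset.mem_coe.mpr hx) (fun hcc => hx0 (Finset.mem_coe.mp hcc))
      by_cases hwx : w = x
      · subst hwx
        have hAlap : lap n A w = -(3:ℝ)^(n+1) / 5 := by
          have h5 : 5 * lap n A w = -(3:ℝ)^(n+1) := by rw [← hAlap5]; exact gs.1
          linarith
        have hClap : lap n C w = 3/5 * (-(3:ℝ)^n) := by
          have : lap n (fun z => (3:ℝ)/5 * G z w) w = 3/5 * lap n (fun z => G z w) w :=
            lap_const_mul n (3/5) (fun z => G z w) w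
          rw [hC, this, gG.1]
        rw [hAlap, hBlap, hClap]
        ring
      · have hne : ctr i w ≠ ctr i x := fun hcon => hwx (ctr_inj i hcon)
        have hAlap : lap n A w = 0 := by
          have h5 : 5 * lap n A w = 0 := by
            rw [← hAlap5]
            exact gs.2.1 (ctr i w) (Finset.mem_coe.mpr hwm')
              (fun hcc => hwm0' (Finset.mem_coe.mp hcc)) hne
          linarith
        have hClap : lap n C w = 0 := by
          have heq : lap n (fun z => (3:ℝ)/5 * G z x) w = 3/5 * lap n (fun z => G z x) w :=
            lap_const_mul n (3/5) (fun z => G z x) w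
          rw [hC, heq, gG.2.1 w (Finset.mem_coe.mpr hw)
            (fun hcc => hw0 (Finset.mem_coe.mp hcc)) hwx]
          ring
        rw [hAlap, hBlap, hClap]; ring

end SG

/-- Self-similar recursion for the Green functions:
`G_{n+1}(φᵢ x, φᵢ y) = (3/5) G_n(x,y) + Σⱼ h_n^j(y) G_{n+1}(φᵢ x, φᵢ aⱼ)`. -/
theorem green_self_similar_recursion (n : ℕ) (hn : 1 ≤ n)
    (G Gs : Pt → Pt → ℝ) (h : Fin 3 → Pt → ℝ)
    (hG : IsGreenFamily n G) (hGs : IsGreenFamily (n + 1) Gs)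
    (hh : IsHarmBasis n h) (i : Fin 3)
    (x : Pt) (hx : x ∈ (V n : Set Pt)) (y : Pt) (hy : y ∈ (V n : Set Pt)) :
    Gs (ctr i x) (ctr i y)
      = (3 / 5) * G x y + ∑ j : Fin 3, h j y * Gs (ctr i x) (ctr i (sierA j)) := by
  have hx' : x ∈ V n := Finset.mem_coe.mp hx
  have hy' : y ∈ V n := Finset.mem_coe.mp hy
  have key := SG.main_identity hG hGs hh i hx' y hy'
  have s1 : Gs (ctr i x) (ctr i y) = Gs (ctr i y) (ctr i x) :=
    SG.green_symm hGs (SG.ctr_mem i hx') (SG.ctr_mem i hy')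
  have s2 : ∀ j : Fin 3, Gs (ctr i (sierA j)) (ctr i x) = Gs (ctr i x) (ctr i (sierA j)) :=
    fun j => SG.green_symm hGs (SG.ctr_mem i (SG.sierA_mem_V j n)) (SG.ctr_mem i hx')
  have s3 : G y x = G x y := SG.green_symm hG hy' hx'
  rw [s1, key, s3, add_comm]
  congr 1
  apply Finset.sum_congr rfl
  intro j _
  rw [s2 j]
  ring

end
end

section
/- Define the diagonal function 𝒢_n : V_n → ℝ by 𝒢_n(x) = G_n(x,x) for x ∈ V_n∖V₀ and 𝒢_n(a_i) = 0 for i = 0,1,2. Then for every n ≥ 1: (a) for all x, y ∈ V_n with x ∼_n y, |𝒢_n(x) − 𝒢_n(y)| ≤ (3/5)^n; and consequently (b) for every x ∈ V_n, |Δ_n 𝒢_n(x)| ≤ 4·3^n. -/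
open scoped Classical
open Real Set

noncomputable section

namespace SGaux

lemma sqrt3_pos : (0:ℝ) < Real.sqrt 3 := Real.sqrt_pos.mpr (by norm_num)
lemma sqrt3_ne : Real.sqrt 3 ≠ 0 := ne_of_gt sqrt3_pos

/-- Barycentric coordinates. -/
def bco : Fin 3 → Pt → ℝ
  | 0 => fun p => 1 - p.1 - p.2 / Real.sqrt 3
  | 1 => fun p => 2 * p.2 / Real.sqrt 3
  | 2 => fun p => p.1 - p.2 / Real.sqrt 3

lemma bco_corner (k i : Fin 3) : bco k (sierA i) = if k = i then 1 else 0 := by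
  fin_cases k <;> fin_cases i <;>
    simp [bco, sierA] <;> field_simp <;> ring

lemma bco_sum (p : Pt) : bco 0 p + bco 1 p + bco 2 p = 1 := by
  simp [bco]; ring

lemma bco_ctr (k i : Fin 3) (x : Pt) :
    bco k (ctr i x) = (bco k x + bco k (sierA i)) / 2 := by
  fin_cases k <;> fin_cases i <;> simp [bco, ctr, sierA] <;> ring

lemma mem_V0 {x : Pt} : x ∈ V 0 ↔ ∃ i : Fin 3, x = sierA i := by
  constructor
  · intro h
    simp only [V, Finset.mem_insert, Finset.mem_singleton] at h
    rcases h with h | h | h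
    exacts [⟨0, h⟩, ⟨1, h⟩, ⟨2, h⟩]
  · rintro ⟨i, rfl⟩
    fin_cases i <;> simp [V]

lemma mem_V_succ {n : ℕ} {x : Pt} :
    x ∈ V (n+1) ↔ ∃ i : Fin 3, ∃ v ∈ V n, ctr i v = x := by
  simp only [V, Finset.mem_union, Finset.mem_image]
  constructor
  · rintro ((⟨v, hv, rfl⟩ | ⟨v, hv, rfl⟩) | ⟨v, hv, rfl⟩)
    exacts [⟨0, v, hv, rfl⟩, ⟨1, v, hv, rfl⟩, ⟨2, v, hv, rfl⟩]
  · rintro ⟨i, v, hv, rfl⟩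
    fin_cases i
    · exact Or.inl (Or.inl ⟨v, hv, rfl⟩)
    · exact Or.inl (Or.inr ⟨v, hv, rfl⟩)
    · exact Or.inr ⟨v, hv, rfl⟩

lemma ctr_fix (i : Fin 3) : ctr i (sierA i) = sierA i := by
  fin_cases i <;> simp [ctr, sierA] <;> norm_num

lemma ctr_comm (i j : Fin 3) : ctr i (sierA j) = ctr j (sierA i) := by
  simp only [ctr, Prod.mk.injEq]
  constructor <;> ring

lemma ctr_inj (i : Fin 3) : Function.Injective (ctr i) := by
  intro x y h
  simp only [ctr, Prod.mk.injEq] at h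
  exact Prod.ext (by linarith [h.1]) (by linarith [h.2])

lemma V0_subset (n : ℕ) (i : Fin 3) : sierA i ∈ V n := by
  induction n with
  | zero => exact mem_V0.mpr ⟨i, rfl⟩
  | succ n ih => exact mem_V_succ.mpr ⟨i, sierA i, ih, ctr_fix i⟩

lemma bco_nonneg : ∀ n, ∀ x ∈ V n, ∀ k : Fin 3, 0 ≤ bco k x := by
  intro n
  induction n with
  | zero =>
    intro x hx k
    obtain ⟨i, rfl⟩ := mem_V0.mp hx
    rw [bco_corner]; split <;> norm_num
  | succ n ih =>
    intro x hx k
    obtain ⟨i, v, hv, rfl⟩ := mem_V_succ.mp hx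
    rw [bco_ctr, bco_corner]
    have := ih v hv k
    split <;> linarith

lemma pt_ext {x y : Pt} (h1 : bco 1 x = bco 1 y) (h2 : bco 2 x = bco 2 y) : x = y := by
  simp only [bco] at h1 h2
  have e2 : x.2 = y.2 := by
    field_simp [sqrt3_ne] at h1; linarith
  have e1 : x.1 = y.1 := by rw [e2] at h2; linarith
  exact Prod.ext e1 e2

lemma sierA_inj {i j : Fin 3} (h : sierA i = sierA j) : i = j := by
  by_contra hij
  have h1 : bco i (sierA i) = 1 := by rw [bco_corner, if_pos rfl]
  have h2 : bco i (sierA j) = 0 := by rw [bco_corner, if_neg hij]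
  rw [h, h2] at h1
  norm_num at h1

lemma bco_eq_one {n : ℕ} {v : Pt} (hv : v ∈ V n) {i : Fin 3} (h : bco i v = 1) :
    v = sierA i := by
  have h0 := bco_nonneg n v hv 0
  have h1 := bco_nonneg n v hv 1
  have h2 := bco_nonneg n v hv 2
  have hs := bco_sum v
  apply pt_ext
  · rw [bco_corner]
    fin_cases i <;> simp_all <;> linarith
  · rw [bco_corner]
    fin_cases i <;> simp_all <;> linarith

lemma bco_le_one {n : ℕ} {v : Pt} (hv : v ∈ V n) (i : Fin 3) : bco i v ≤ 1 := by
  have h0 := bco_nonneg n v hv 0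
  have h1 := bco_nonneg n v hv 1
  have h2 := bco_nonneg n v hv 2
  have hs := bco_sum v
  fin_cases i <;> simp_all <;> linarith

/-- Two distinct cells intersect only in the shared midpoint. -/
lemma cell_inter {n : ℕ} {i j : Fin 3} (hij : i ≠ j) {u v : Pt}
    (hu : u ∈ V n) (hv : v ∈ V n) (h : ctr i u = ctr j v) :
    u = sierA j ∧ v = sierA i := by
  have key : ∀ {a b : Fin 3}, a ≠ b → ∀ {p q : Pt}, p ∈ V n → q ∈ V n →
      ctr a p = ctr b q → q = sierA a := by
    intro a b hab p q hp hq hpq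
    have e1 : bco a (ctr a p) = (bco a p + 1) / 2 := by
      rw [bco_ctr, bco_corner, if_pos rfl]
    have e2 : bco a (ctr b q) = (bco a q) / 2 := by
      rw [bco_ctr, bco_corner, if_neg hab, add_zero]
    rw [hpq, e2] at e1
    have hq1 : bco a q = bco a p + 1 := by linarith
    have := bco_nonneg n p hp a
    have := bco_le_one hq a
    exact bco_eq_one hq (by linarith)
  exact ⟨key hij.symm hv hu h.symm, key hij hu hv h⟩

end SGaux
namespace SGaux

lemma mem_Ed_succ {n : ℕ} {p : Pt × Pt} :
    p ∈ Ed (n+1) ↔ ∃ i : Fin 3, ∃ q ∈ Ed n, (ctr i q.1, ctr i q.2) = p := by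
  simp only [Ed, Finset.mem_biUnion, Finset.mem_univ, true_and, Finset.mem_image]

lemma Ed_mem : ∀ n, ∀ p ∈ Ed n,
    p.1 ∈ V n ∧ p.2 ∈ V n ∧ p.1 ≠ p.2 ∧ (p.2, p.1) ∈ Ed n := by
  intro n
  induction n with
  | zero =>
    intro p hp
    rw [Ed, Finset.mem_filter, Finset.mem_product] at hp
    exact ⟨hp.1.1, hp.1.2, hp.2, by
      rw [Ed, Finset.mem_filter, Finset.mem_product]
      exact ⟨⟨hp.1.2, hp.1.1⟩, Ne.symm hp.2⟩⟩
  | succ n ih =>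
    intro p hp
    obtain ⟨i, q, hq, rfl⟩ := mem_Ed_succ.mp hp
    obtain ⟨h1, h2, h3, h4⟩ := ih q hq
    refine ⟨mem_V_succ.mpr ⟨i, q.1, h1, rfl⟩, mem_V_succ.mpr ⟨i, q.2, h2, rfl⟩,
      fun h => h3 (ctr_inj i h), ?_⟩
    exact mem_Ed_succ.mpr ⟨i, (q.2, q.1), h4, rfl⟩

/-- Adjacency relation. -/
def adjn (n : ℕ) (a b : Pt) : Prop := (a, b) ∈ Ed n

lemma adjn_step {n : ℕ} (i : Fin 3) {a b : Pt} (h : adjn n a b) :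
    adjn (n+1) (ctr i a) (ctr i b) :=
  mem_Ed_succ.mpr ⟨i, (a, b), h, rfl⟩

lemma rtg_map {n : ℕ} (i : Fin 3) {a b : Pt}
    (h : Relation.ReflTransGen (adjn n) a b) :
    Relation.ReflTransGen (adjn (n+1)) (ctr i a) (ctr i b) := by
  induction h with
  | refl => exact Relation.ReflTransGen.refl
  | tail _ h2 ih => exact ih.tail (adjn_step i h2)

lemma conn : ∀ n, ∀ x ∈ V n, ∀ i : Fin 3,
    Relation.ReflTransGen (adjn n) x (sierA i) := by
  intro n
  induction n with
  | zero =>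
    intro x hx i
    obtain ⟨j, rfl⟩ := mem_V0.mp hx
    by_cases h : j = i
    · subst h; exact Relation.ReflTransGen.refl
    · refine Relation.ReflTransGen.single ?_
      rw [adjn, Ed, Finset.mem_filter, Finset.mem_product]
      exact ⟨⟨V0_subset 0 j, V0_subset 0 i⟩, fun hc => h (sierA_inj hc)⟩
  | succ n ih =>
    intro x hx i
    obtain ⟨j, v, hv, rfl⟩ := mem_V_succ.mp hx
    have p1 : Relation.ReflTransGen (adjn (n+1)) (ctr j v) (ctr j (sierA i)) :=
      rtg_map j (ih v hv i)
    have p2 : Relation.ReflTransGen (adjn (n+1)) (ctr i (sierA j)) (ctr i (sierA i)) :=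
      rtg_map i (ih (sierA j) (V0_subset n j) i)
    rw [ctr_fix] at p2
    rw [ctr_comm] at p1
    exact p1.trans p2

/-- Maximum principle: a function harmonic away from `V 0 ∪ {w}`, vanishing
on the corners, is bounded above by `max (u w) 0`. -/
lemma maxp {n : ℕ} {w : Pt} (u : Pt → ℝ)
    (hharm : ∀ x ∈ V n, x ∉ V 0 → x ≠ w → lap n u x = 0)
    (hb : ∀ i : Fin 3, u (sierA i) = 0) :
    ∀ y ∈ V n, u y ≤ max (u w) 0 := by
  obtain ⟨z0, hz0, hmax⟩ := (V n).exists_max_image u ⟨sierA 0, V0_subset n 0⟩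
  suffices h : u z0 ≤ max (u w) 0 by
    intro y hy; exact le_trans (hmax y hy) h
  have hpath := conn n z0 hz0 0
  -- we show: any point on a path to the corner carrying the max value forces the bound
  have key : ∀ z : Pt, Relation.ReflTransGen (adjn n) z (sierA 0) →
      z ∈ V n → u z = u z0 → u z0 ≤ max (u w) 0 := by
    intro z hz
    induction hz using Relation.ReflTransGen.head_induction_on with
    | refl =>
      intro _ hu
      rw [← hu, hb 0]
      exact le_max_right _ _
    | @head a c hadj hrest ih =>
      intro ha hua
      by_cases ha0 : a ∈ V 0
      · obtain ⟨i, rfl⟩ := mem_V0.mp ha0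
        rw [← hua, hb i]; exact le_max_right _ _
      by_cases haw : a = w
      · rw [← hua, haw]; exact le_max_left _ _
      · have hlap := hharm a ha ha0 haw
        rw [lap] at hlap
        have h5 : (0:ℝ) < 5 ^ n := by positivity
        have hsum : ∑ p ∈ (Ed n).filter (fun p => p.1 = a), (u p.2 - u p.1) = 0 := by
          rcases mul_eq_zero.mp hlap with h | h
          · exact absurd h (ne_of_gt h5)
          · exact h
        have hnp : ∀ p ∈ (Ed n).filter (fun p => p.1 = a), u p.2 - u p.1 ≤ 0 := by
          intro p hp
          rw [Finset.mem_filter] at hp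
          have := hmax p.2 (Ed_mem n p hp.1).2.1
          rw [hp.2, hua]
          linarith
        have hall := (Finset.sum_eq_zero_iff_of_nonpos hnp).mp hsum
        have hedge : ((a, c) : Pt × Pt) ∈ (Ed n).filter (fun p => p.1 = a) :=
          Finset.mem_filter.mpr ⟨hadj, rfl⟩
        have hc := hall _ hedge
        simp only at hc
        have huc : u c = u z0 := by rw [← hua]; linarith
        exact ih (Ed_mem n _ hadj).2.1 huc
  exact key z0 hpath hz0 rfl

/-- Degree of a vertex: number of directed edges leaving it. -/
def degE (n : ℕ) (x : Pt) : ℕ := ((Ed n).filter fun p => p.1 = x).card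

lemma V0_card : (V 0).card ≤ 3 := by
  rw [V]
  refine le_trans (Finset.card_insert_le _ _) (Nat.succ_le_succ ?_)
  refine le_trans (Finset.card_insert_le _ _) (Nat.succ_le_succ ?_)
  simp

lemma deg0 (x : Pt) : degE 0 x ≤ 2 := by
  by_cases hx : x ∈ V 0
  · have hsub : (Ed 0).filter (fun p => p.1 = x) ⊆ {x} ×ˢ ((V 0).erase x) := by
      intro p hp
      rw [Finset.mem_filter] at hp
      obtain ⟨h1, h2, h3, -⟩ := Ed_mem 0 p hp.1
      rw [Finset.mem_product, Finset.mem_singleton, Finset.mem_erase]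
      exact ⟨hp.2, by rw [← hp.2]; exact h3.symm, h2⟩
    calc degE 0 x ≤ ({x} ×ˢ ((V 0).erase x)).card := Finset.card_le_card hsub
      _ = ((V 0).erase x).card := by rw [Finset.card_product, Finset.card_singleton, one_mul]
      _ ≤ 2 := by
          rw [Finset.card_erase_of_mem hx]
          have := V0_card
          omega
  · have : (Ed 0).filter (fun p => p.1 = x) = ∅ := by
      rw [Finset.filter_eq_empty_iff]
      intro p hp hpx
      exact hx (hpx ▸ (Ed_mem 0 p hp).1)
    rw [degE, this]; simp

lemma deg_succ_le (n : ℕ) (x : Pt) :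
    degE (n+1) x ≤ ∑ i : Fin 3,
      (((Ed n).image fun p => (ctr i p.1, ctr i p.2)).filter fun p => p.1 = x).card := by
  rw [degE, Ed, Finset.filter_biUnion]
  exact Finset.card_biUnion_le

lemma cell_card_le {n : ℕ} {i : Fin 3} {x v : Pt} (hx : ctr i v = x) :
    (((Ed n).image fun p => (ctr i p.1, ctr i p.2)).filter fun p => p.1 = x).card
      ≤ degE n v := by
  have hsub : ((Ed n).image fun p => (ctr i p.1, ctr i p.2)).filter (fun p => p.1 = x)
      ⊆ ((Ed n).filter fun p => p.1 = v).image fun p => (ctr i p.1, ctr i p.2) := by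
    intro p hp
    rw [Finset.mem_filter, Finset.mem_image] at hp
    obtain ⟨⟨q, hq, rfl⟩, hpx⟩ := hp
    refine Finset.mem_image.mpr ⟨q, Finset.mem_filter.mpr ⟨hq, ?_⟩, rfl⟩
    apply ctr_inj i
    rw [hx]
    exact hpx
  calc _ ≤ _ := Finset.card_le_card hsub
    _ ≤ _ := Finset.card_image_le

lemma cell_card_zero {n : ℕ} {i : Fin 3} {x : Pt} (hx : ∀ v ∈ V n, ctr i v ≠ x) :
    (((Ed n).image fun p => (ctr i p.1, ctr i p.2)).filter fun p => p.1 = x).card = 0 := by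
  rw [Finset.card_eq_zero, Finset.filter_eq_empty_iff]
  intro p hp
  rw [Finset.mem_image] at hp
  obtain ⟨q, hq, rfl⟩ := hp
  exact hx q.1 (Ed_mem n q hq).1

lemma deg_corner : ∀ n, ∀ i : Fin 3, degE n (sierA i) ≤ 2 := by
  intro n
  induction n with
  | zero => intro i; exact deg0 _
  | succ n ih =>
    intro i
    refine le_trans (deg_succ_le n (sierA i)) ?_
    have hb : ∀ l : Fin 3,
        (((Ed n).image fun p => (ctr l p.1, ctr l p.2)).filter
          fun p => p.1 = sierA i).card ≤ if l = i then 2 else 0 := by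
      intro l
      by_cases hl : l = i
      · subst hl
        rw [if_pos rfl]
        exact le_trans (cell_card_le (ctr_fix l)) (ih l)
      · rw [if_neg hl]
        refine le_of_eq (cell_card_zero ?_)
        intro v hv hc
        have := cell_inter hl hv (V0_subset n i) (by rw [hc, ctr_fix])
        exact hl (sierA_inj this.2.symm) 
    calc _ ≤ ∑ l : Fin 3, if l = i then 2 else 0 := Finset.sum_le_sum fun l _ => hb l
      _ = 2 := by simp
  
lemma deg_le : ∀ n, ∀ x : Pt, degE n x ≤ 4 := by
  intro n
  induction n with
  | zero => intro x; exact le_trans (deg0 x) (by norm_num)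
  | succ n ih =>
    intro x
    refine le_trans (deg_succ_le n x) ?_
    by_cases hsh : ∃ i j : Fin 3, i ≠ j ∧ ∃ u ∈ V n, ∃ v ∈ V n, ctr i u = x ∧ ctr j v = x
    · obtain ⟨i, j, hij, u, hu, v, hv, hiu, hjv⟩ := hsh
      obtain ⟨hu', hv'⟩ := cell_inter hij hu hv (hiu.trans hjv.symm)
      have hb : ∀ l : Fin 3,
          (((Ed n).image fun p => (ctr l p.1, ctr l p.2)).filter
            fun p => p.1 = x).card ≤ (if l = i then 2 else 0) + (if l = j then 2 else 0) := by
        intro l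
        by_cases hli : l = i
        · subst hli
          refine le_trans (le_trans (cell_card_le hiu) ?_) (le_add_of_nonneg_right (Nat.zero_le _))
          rw [hu', if_pos rfl]; exact deg_corner n j
        by_cases hlj : l = j
        · subst hlj
          refine le_trans (le_trans (cell_card_le hjv) ?_) (le_add_of_nonneg_left (Nat.zero_le _))
          rw [hv', if_pos rfl]; exact deg_corner n i
        · rw [if_neg hli, if_neg hlj]
          refine le_of_eq (cell_card_zero ?_)
          intro w hw hc
          have := cell_inter hli hw hu (hc.trans hiu.symm)
          rw [hu'] at this
          exact hlj (sierA_inj this.2).symm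
      calc _ ≤ ∑ l : Fin 3, ((if l = i then 2 else 0) + (if l = j then 2 else 0)) :=
            Finset.sum_le_sum fun l _ => hb l
        _ = 4 := by rw [Finset.sum_add_distrib]; simp
    · push_neg at hsh
      by_cases hone : ∃ i : Fin 3, ∃ u ∈ V n, ctr i u = x
      · obtain ⟨i, u, hu, hiu⟩ := hone
        have hb : ∀ l : Fin 3,
            (((Ed n).image fun p => (ctr l p.1, ctr l p.2)).filter
              fun p => p.1 = x).card ≤ if l = i then 4 else 0 := by
          intro l
          by_cases hli : l = i
          · subst hli; rw [if_pos rfl]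
            exact le_trans (cell_card_le hiu) (ih u)
          · rw [if_neg hli]
            refine le_of_eq (cell_card_zero ?_)
            intro w hw hc
            exact hsh l i hli w hw u hu hc hiu
        calc _ ≤ ∑ l : Fin 3, if l = i then 4 else 0 := Finset.sum_le_sum fun l _ => hb l
          _ = 4 := by simp
      · push_neg at hone
        have : ∀ l : Fin 3,
            (((Ed n).image fun p => (ctr l p.1, ctr l p.2)).filter
              fun p => p.1 = x).card = 0 := fun l => cell_card_zero fun v hv => hone l v hv
        simp [this]

end SGaux
namespace SGaux

/-- Directed energy pairing (each undirected edge counted twice). -/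
def ep (n : ℕ) (u v : Pt → ℝ) : ℝ :=
  ∑ p ∈ Ed n, (u p.2 - u p.1) * (v p.2 - v p.1)

lemma ep_comm (n : ℕ) (u v : Pt → ℝ) : ep n u v = ep n v u := by
  unfold ep
  exact Finset.sum_congr rfl fun p _ => by ring

/-- Gauss–Green summation formula. -/
lemma sum_lap (n : ℕ) (u v : Pt → ℝ) :
    ∑ x ∈ V n, v x * lap n u x = -((5:ℝ) ^ n / 2) * ep n u v := by
  have step1 : ∑ x ∈ V n, v x * lap n u x
      = ∑ x ∈ V n, ∑ p ∈ (Ed n).filter (fun p => p.1 = x),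
          (5:ℝ) ^ n * (v p.1 * (u p.2 - u p.1)) := by
    refine Finset.sum_congr rfl fun x _ => ?_
    rw [lap, Finset.mul_sum, Finset.mul_sum]
    refine Finset.sum_congr rfl fun p hp => ?_
    rw [(Finset.mem_filter.mp hp).2]
    ring
  have step2 : ∑ x ∈ V n, ∑ p ∈ (Ed n).filter (fun p => p.1 = x),
        (5:ℝ) ^ n * (v p.1 * (u p.2 - u p.1))
      = ∑ p ∈ Ed n, (5:ℝ) ^ n * (v p.1 * (u p.2 - u p.1)) :=
    Finset.sum_fiberwise_of_maps_to (fun p hp => (Ed_mem n p hp).1) _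
  have swap : ∑ p ∈ Ed n, v p.1 * (u p.2 - u p.1)
      = ∑ p ∈ Ed n, v p.2 * (u p.1 - u p.2) := by
    refine Finset.sum_nbij' (fun p => (p.2, p.1)) (fun p => (p.2, p.1)) ?_ ?_ ?_ ?_ ?_
    · intro p hp; exact (Ed_mem n p hp).2.2.2
    · intro p hp; exact (Ed_mem n p hp).2.2.2
    · intro p _; rfl
    · intro p _; rfl
    · intro p _; rfl
  have key : ∑ p ∈ Ed n, v p.1 * (u p.2 - u p.1) = -(ep n u v) / 2 := by
    have : 2 * ∑ p ∈ Ed n, v p.1 * (u p.2 - u p.1) = -(ep n u v) := by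
      rw [two_mul]
      nth_rewrite 2 [swap]
      unfold ep
      rw [← Finset.sum_add_distrib, ← Finset.sum_neg_distrib]
      exact Finset.sum_congr rfl fun p _ => by ring
    linarith
  rw [step1, step2, ← Finset.mul_sum, key]
  ring

variable {n : ℕ} {G : Pt → Pt → ℝ}

/-- The Green function with pole `z`, extended by `0` for `z ∈ V 0`. -/
def gf (G : Pt → Pt → ℝ) (z : Pt) : Pt → ℝ :=
  fun x => if z ∈ V 0 then 0 else G x z

lemma gf_corner (hG : IsGreenFamily n G) {z : Pt} (hz : z ∈ V n) (i : Fin 3) :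
    gf G z (sierA i) = 0 := by
  unfold gf
  split
  · rfl
  · next h =>
    exact (hG.1 z (Finset.mem_coe.mpr hz) (fun hc => h (Finset.mem_coe.mp hc))).2.2 i

/-- Reproducing property of the Green kernel. -/
lemma repro (hG : IsGreenFamily n G) {z : Pt} (hz : z ∈ V n) (v : Pt → ℝ)
    (hv : ∀ i : Fin 3, v (sierA i) = 0) :
    (5:ℝ) ^ n * ep n (gf G z) v = 2 * 3 ^ n * v z := by
  by_cases hz0 : z ∈ V 0
  · have hgf : gf G z = fun _ => (0:ℝ) := by
      funext x; simp [gf, hz0]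
    obtain ⟨i, rfl⟩ := mem_V0.mp hz0
    rw [hgf, hv i]
    unfold ep
    simp
  · have hgf : gf G z = fun x => G x z := by
      funext x; simp [gf, hz0]
    obtain ⟨h1, h2, h3⟩ := hG.1 z (Finset.mem_coe.mpr hz)
      (fun hc => hz0 (Finset.mem_coe.mp hc))
    have hsum : ∑ x ∈ V n, v x * lap n (gf G z) x = v z * (-(3:ℝ) ^ n) := by
      rw [Finset.sum_eq_single_of_mem z hz]
      · rw [hgf, h1]
      · intro x hx hxz
        by_cases hx0 : x ∈ V 0
        · obtain ⟨i, rfl⟩ := mem_V0.mp hx0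
          rw [hv i, zero_mul]
        · rw [hgf, h2 x (Finset.mem_coe.mpr hx) (fun hc => hx0 (Finset.mem_coe.mp hc)) hxz,
            mul_zero]
    rw [sum_lap] at hsum
    have h5 : (0:ℝ) < 5 ^ n := by positivity
    nlinarith [hsum]

lemma gf_symm (hG : IsGreenFamily n G) {x y : Pt} (hx : x ∈ V n) (hy : y ∈ V n) :
    gf G y x = gf G x y := by
  have h1 := repro hG hx (gf G y) (gf_corner hG hy)
  have h2 := repro hG hy (gf G x) (gf_corner hG hx)
  rw [ep_comm] at h2
  have h3 : (0:ℝ) < 3 ^ n := by positivity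
  nlinarith [h1, h2]

/-- The diagonal value is nonnegative. -/
lemma gf_diag_nonneg (hG : IsGreenFamily n G) {w : Pt} (hw : w ∈ V n) :
    0 ≤ gf G w w := by
  have h := repro hG hw (gf G w) (gf_corner hG hw)
  have hep : 0 ≤ ep n (gf G w) (gf G w) := by
    unfold ep
    exact Finset.sum_nonneg fun p _ => mul_self_nonneg _
  have h5 : (0:ℝ) < 5 ^ n := by positivity
  have h3 : (0:ℝ) < 3 ^ n := by positivity
  nlinarith

/-- Diagonal dominance of the Green kernel, via the maximum principle. -/
lemma gf_dom (hG : IsGreenFamily n G) {w : Pt} (hw : w ∈ V n) {y : Pt} (hy : y ∈ V n) :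
    gf G w y ≤ gf G w w := by
  by_cases hw0 : w ∈ V 0
  · simp [gf, hw0]
  · have hgf : gf G w = fun x => G x w := by funext x; simp [gf, hw0]
    obtain ⟨h1, h2, h3⟩ := hG.1 w (Finset.mem_coe.mpr hw)
      (fun hc => hw0 (Finset.mem_coe.mp hc))
    have hmp := maxp (n := n) (w := w) (gf G w)
      (fun x hx hx0 hxw => by
        rw [hgf]
        exact h2 x (Finset.mem_coe.mpr hx) (fun hc => hx0 (Finset.mem_coe.mp hc)) hxw)
      (gf_corner hG hw)
    have := hmp y hy
    rw [max_eq_left (gf_diag_nonneg hG hw)] at this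
    exact this

end SGaux
open SGaux in
/-- For the diagonal function `𝒢_n(x) = G_n(x,x)` (set to `0` on `V₀`):
(a) `|𝒢_n x − 𝒢_n y| ≤ (3/5)^n` along edges of `E_n`, and consequently
(b) `|Δ_n 𝒢_n x| ≤ 4·3^n` on `V_n`. -/
theorem green_diagonal_lipschitz_and_laplacian_bound (n : ℕ) (hn : 1 ≤ n)
    (G : Pt → Pt → ℝ) (hG : IsGreenFamily n G) (diagG : Pt → ℝ)
    (hdiag0 : ∀ i : Fin 3, diagG (sierA i) = 0)
    (hdiag : ∀ x ∈ (V n : Set Pt), x ∉ (V 0 : Set Pt) → diagG x = G x x) :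
    (∀ p ∈ Ed n, |diagG p.1 - diagG p.2| ≤ (3 / 5 : ℝ) ^ n) ∧
    ∀ x ∈ (V n : Set Pt), |lap n diagG x| ≤ 4 * 3 ^ n := by
  have h5 : (0:ℝ) < 5 ^ n := by positivity
  have h3 : (0:ℝ) < 3 ^ n := by positivity
  have hdG : ∀ z ∈ V n, diagG z = gf G z z := by
    intro z hz
    by_cases h0 : z ∈ V 0
    · obtain ⟨i, rfl⟩ := mem_V0.mp h0
      rw [hdiag0 i]
      simp [gf, h0]
    · rw [hdiag z (Finset.mem_coe.mpr hz) (fun hc => h0 (Finset.mem_coe.mp hc))]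
      simp [gf, h0]
  have parta : ∀ p ∈ Ed n, |diagG p.1 - diagG p.2| ≤ (3 / 5 : ℝ) ^ n := by
    intro p hp
    obtain ⟨hx, hy, hne, hsw⟩ := Ed_mem n p hp
    set x := p.1 with hxdef
    set y := p.2 with hydef
    set F : Pt → ℝ := fun t => gf G x t - gf G y t with hF
    have hFc : ∀ i : Fin 3, F (sierA i) = 0 := by
      intro i
      simp only [hF, gf_corner hG hx i, gf_corner hG hy i, sub_zero]
    have hrx := repro hG hx F hFc
    have hry := repro hG hy F hFc
    have hepF : ep n F F = ep n (gf G x) F - ep n (gf G y) F := by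
      unfold ep
      rw [← Finset.sum_sub_distrib]
      exact Finset.sum_congr rfl fun q _ => by simp only [hF]; ring
    set t := F x - F y with htdef
    have ht5 : (5:ℝ) ^ n * ep n F F = 2 * 3 ^ n * t := by
      rw [hepF, mul_sub, hrx, hry]; ring
    have hlow : 2 * t ^ 2 ≤ ep n F F := by
      have hsub : ({p, (p.2, p.1)} : Finset (Pt × Pt)) ⊆ Ed n := by
        intro q hq
        rcases Finset.mem_insert.mp hq with rfl | hq
        · exact hp
        · rw [Finset.mem_singleton.mp hq]; exact hsw
      have hppair : p ≠ (p.2, p.1) := by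
        intro h
        exact hne (congrArg Prod.fst h)
      have hle := Finset.sum_le_sum_of_subset_of_nonneg hsub
        (f := fun q => (F q.2 - F q.1) * (F q.2 - F q.1))
        (fun q _ _ => mul_self_nonneg _)
      rw [Finset.sum_pair hppair] at hle
      have he : (F p.2 - F p.1) * (F p.2 - F p.1)
          + (F (p.2, p.1).2 - F (p.2, p.1).1) * (F (p.2, p.1).2 - F (p.2, p.1).1)
          = 2 * t ^ 2 := by
        simp only [htdef]
        ring
      rw [he] at hle
      exact le_trans hle (le_of_eq rfl)
    have htnn : 0 ≤ t := by nlinarith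
    have htub : t ≤ (3 / 5 : ℝ) ^ n := by
      rw [div_pow]
      rcases eq_or_lt_of_le htnn with h | h
      · rw [← h]; positivity
      · have hmul : t * (5:ℝ) ^ n ≤ 3 ^ n := by
          have h1 : (5:ℝ) ^ n * t * t ≤ 3 ^ n * t := by nlinarith
          have := le_of_mul_le_mul_right (by linarith : ((5:ℝ) ^ n * t) * t ≤ 3 ^ n * t) h
          linarith
        exact (le_div_iff₀ h5).mpr hmul
    have hsym : gf G y x = gf G x y := gf_symm hG hx hy
    have hFx : 0 ≤ F x := by
      have hd := gf_dom hG hx hy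
      simp only [hF]
      linarith [hsym]
    have hFy : F y ≤ 0 := by
      have hd := gf_dom hG hy hx
      simp only [hF]
      linarith [hsym]
    have hdiff : diagG x - diagG y = F x + F y := by
      rw [hdG x hx, hdG y hy]
      simp only [hF]
      linarith [hsym]
    simp only [htdef] at htub
    clear_value x y F t
    rw [hdiff, abs_le]
    refine ⟨by linarith, by linarith⟩
  refine ⟨parta, ?_⟩
  intro x hx
  rw [lap, abs_mul, abs_of_pos h5]
  have hcard : (((Ed n).filter fun p => p.1 = x).card : ℝ) ≤ 4 := by
    exact_mod_cast deg_le n x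
  have h35 : (0:ℝ) ≤ (3 / 5 : ℝ) ^ n := by positivity
  have hsum : |∑ p ∈ (Ed n).filter (fun p => p.1 = x), (diagG p.2 - diagG p.1)|
      ≤ 4 * (3 / 5 : ℝ) ^ n := by
    calc |∑ p ∈ (Ed n).filter (fun p => p.1 = x), (diagG p.2 - diagG p.1)|
        ≤ ∑ p ∈ (Ed n).filter (fun p => p.1 = x), |diagG p.2 - diagG p.1| :=
          Finset.abs_sum_le_sum_abs _ _
      _ ≤ ∑ _p ∈ (Ed n).filter (fun p => p.1 = x), (3 / 5 : ℝ) ^ n := by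
          refine Finset.sum_le_sum fun p hp => ?_
          rw [abs_sub_comm]
          exact parta p (Finset.mem_filter.mp hp).1
      _ = (((Ed n).filter fun p => p.1 = x).card : ℝ) * (3 / 5 : ℝ) ^ n := by
          rw [Finset.sum_const, nsmul_eq_mul]
      _ ≤ 4 * (3 / 5 : ℝ) ^ n := mul_le_mul_of_nonneg_right hcard h35
  calc (5:ℝ) ^ n * |∑ p ∈ (Ed n).filter (fun p => p.1 = x), (diagG p.2 - diagG p.1)|
      ≤ (5:ℝ) ^ n * (4 * (3 / 5 : ℝ) ^ n) := mul_le_mul_of_nonneg_left hsum (le_of_lt h5)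
    _ = 4 * 3 ^ n := by
        rw [div_pow]
        field_simp

end
end

section
/- Assume φ* > 0. Then the density function ρ is continuous and strictly increasing on [0, φ*) with ρ(0) = 0, and ρ is a bijection from [0, φ*) onto [0, ρ*), where ρ* = sup_{0≤φ<φ*} ρ(φ). -/
open scoped Classical

noncomputable section

/-- `g(k)! = g(1) ⋯ g(k)`, with `g(0)! = 1`. -/
def gfact (g : ℕ → ℝ) (k : ℕ) : ℝ := ∏ j ∈ Finset.range k, g (j + 1)

/-- The domain `[0, φ*)`, where `φ*` is the radius of convergence of the
partition function `Z(φ) = Σ_k φ^k / g(k)!`: for `φ ≥ 0`, `φ < φ*` iff the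
series is summable at some `ψ > φ`. -/
def belowRadius (g : ℕ → ℝ) : Set ℝ :=
  {φ : ℝ | 0 ≤ φ ∧ ∃ ψ : ℝ, φ < ψ ∧ Summable fun k : ℕ => ψ ^ k / gfact g k}

/-- The mean particle density `ρ(φ) = Z(φ)⁻¹ Σ_k k φ^k / g(k)!`. -/
def density (g : ℕ → ℝ) (φ : ℝ) : ℝ :=
  (∑' k : ℕ, (k : ℝ) * φ ^ k / gfact g k) / ∑' k : ℕ, φ ^ k / gfact g k

section Aux

variable {g : ℕ → ℝ}

lemma gfact_pos (hg : ∀ k : ℕ, 1 ≤ k → 0 < g k) (k : ℕ) : 0 < gfact g k :=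
  Finset.prod_pos fun j _ => hg (j + 1) (Nat.le_add_left 1 j)

lemma summable_aux (hg : ∀ k : ℕ, 1 ≤ k → 0 < g k) {ψ φ : ℝ} (n : ℕ)
    (hψ : Summable fun k : ℕ => ψ ^ k / gfact g k) (h0 : 0 ≤ φ) (hlt : φ < ψ) :
    Summable fun k : ℕ => (k : ℝ) ^ n * φ ^ k / gfact g k := by
  have hψ0 : 0 < ψ := lt_of_le_of_lt h0 hlt
  obtain ⟨C, hC⟩ := hψ.tendsto_atTop_zero.bddAbove_range
  rw [mem_upperBounds] at hC
  have hr : ‖φ / ψ‖ < 1 := by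
    rw [Real.norm_eq_abs, abs_of_nonneg (div_nonneg h0 hψ0.le)]
    exact (div_lt_one hψ0).2 hlt
  have hsum := (summable_pow_mul_geometric_of_norm_lt_one n hr).mul_left C
  refine Summable.of_nonneg_of_le (fun k => ?_) (fun k => ?_) hsum
  · have := gfact_pos hg k
    positivity
  · have hgf := gfact_pos hg k
    have h1 : φ ^ k = (φ / ψ) ^ k * ψ ^ k := by
      rw [← mul_pow, div_mul_cancel₀ _ hψ0.ne']
    have h2 : ψ ^ k / gfact g k ≤ C := hC _ ⟨k, rfl⟩
    have hrk : (0:ℝ) ≤ (k : ℝ) ^ n * (φ / ψ) ^ k := by positivity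
    calc (k:ℝ) ^ n * φ ^ k / gfact g k
        = (ψ ^ k / gfact g k) * ((k:ℝ) ^ n * (φ / ψ) ^ k) := by rw [h1]; ring
      _ ≤ C * ((k:ℝ) ^ n * (φ / ψ) ^ k) := mul_le_mul_of_nonneg_right h2 hrk

lemma summable_Z (hg : ∀ k : ℕ, 1 ≤ k → 0 < g k) {ψ φ : ℝ}
    (hψ : Summable fun k : ℕ => ψ ^ k / gfact g k) (h0 : 0 ≤ φ) (hlt : φ < ψ) :
    Summable fun k : ℕ => φ ^ k / gfact g k := by
  simpa using summable_aux hg 0 hψ h0 hlt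

lemma summable_N (hg : ∀ k : ℕ, 1 ≤ k → 0 < g k) {ψ φ : ℝ}
    (hψ : Summable fun k : ℕ => ψ ^ k / gfact g k) (h0 : 0 ≤ φ) (hlt : φ < ψ) :
    Summable fun k : ℕ => (k : ℝ) * φ ^ k / gfact g k := by
  simpa using summable_aux hg 1 hψ h0 hlt

lemma Z_pos (hg : ∀ k : ℕ, 1 ≤ k → 0 < g k) {φ : ℝ} (h0 : 0 ≤ φ)
    (hs : Summable fun k : ℕ => φ ^ k / gfact g k) :
    0 < ∑' k : ℕ, φ ^ k / gfact g k := by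
  have h1 := Summable.le_tsum hs 0 (fun j _ => by
    have := gfact_pos hg j; positivity)
  have hgf0 : gfact g 0 = 1 := by simp [gfact]
  rw [pow_zero, hgf0, div_one] at h1
  linarith

lemma pow_cross {φ1 φ2 : ℝ} (h1 : 0 ≤ φ1) (h12 : φ1 ≤ φ2) {j k : ℕ} (hjk : k ≤ j) :
    φ2 ^ k * φ1 ^ j ≤ φ2 ^ j * φ1 ^ k := by
  obtain ⟨m, rfl⟩ := Nat.exists_eq_add_of_le hjk
  have h2 : 0 ≤ φ2 := h1.trans h12
  have hm : φ1 ^ m ≤ φ2 ^ m := pow_le_pow_left₀ h1 h12 m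
  have hk : (0:ℝ) ≤ φ2 ^ k * φ1 ^ k := mul_nonneg (pow_nonneg h2 k) (pow_nonneg h1 k)
  calc φ2 ^ k * φ1 ^ (k + m) = (φ2 ^ k * φ1 ^ k) * φ1 ^ m := by rw [pow_add]; ring
    _ ≤ (φ2 ^ k * φ1 ^ k) * φ2 ^ m := mul_le_mul_of_nonneg_left hm hk
    _ = φ2 ^ (k + m) * φ1 ^ k := by rw [pow_add]; ring

lemma cross_lt (hg : ∀ k : ℕ, 1 ≤ k → 0 < g k) {φ1 φ2 ψ : ℝ}
    (h1 : 0 ≤ φ1) (h12 : φ1 < φ2) (h2ψ : φ2 < ψ)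
    (hψ : Summable fun k : ℕ => ψ ^ k / gfact g k) :
    (∑' k : ℕ, (k : ℝ) * φ1 ^ k / gfact g k) * (∑' k : ℕ, φ2 ^ k / gfact g k)
      < (∑' k : ℕ, (k : ℝ) * φ2 ^ k / gfact g k) * (∑' k : ℕ, φ1 ^ k / gfact g k) := by
  have h20 : 0 ≤ φ2 := h1.trans h12.le
  have h1ψ : φ1 < ψ := h12.trans h2ψ
  have sZ1 := summable_Z hg hψ h1 h1ψ
  have sZ2 := summable_Z hg hψ h20 h2ψ
  have sN1 := summable_N hg hψ h1 h1ψ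
  have sN2 := summable_N hg hψ h20 h2ψ
  -- products as double sums
  have nN2 : Summable fun k : ℕ => ‖(k : ℝ) * φ2 ^ k / gfact g k‖ := by
    simpa only [Real.norm_eq_abs] using sN2.abs
  have nN1 : Summable fun k : ℕ => ‖(k : ℝ) * φ1 ^ k / gfact g k‖ := by
    simpa only [Real.norm_eq_abs] using sN1.abs
  have nZ1 : Summable fun k : ℕ => ‖φ1 ^ k / gfact g k‖ := by
    simpa only [Real.norm_eq_abs] using sZ1.abs
  have nZ2 : Summable fun k : ℕ => ‖φ2 ^ k / gfact g k‖ := by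
    simpa only [Real.norm_eq_abs] using sZ2.abs
  set u : ℕ × ℕ → ℝ := fun p => ((p.1 : ℝ) * φ2 ^ p.1 / gfact g p.1) * (φ1 ^ p.2 / gfact g p.2)
    with hu
  set v' : ℕ × ℕ → ℝ := fun p => ((p.1 : ℝ) * φ1 ^ p.1 / gfact g p.1) * (φ2 ^ p.2 / gfact g p.2)
    with hv'
  have su : Summable u := summable_mul_of_summable_norm
    (f := fun k : ℕ => (k : ℝ) * φ2 ^ k / gfact g k)
    (g := fun k : ℕ => φ1 ^ k / gfact g k) nN2 nZ1
  have sv' : Summable v' := summable_mul_of_summable_norm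
    (f := fun k : ℕ => (k : ℝ) * φ1 ^ k / gfact g k)
    (g := fun k : ℕ => φ2 ^ k / gfact g k) nN1 nZ2
  have eA : (∑' k : ℕ, (k : ℝ) * φ2 ^ k / gfact g k) * (∑' k : ℕ, φ1 ^ k / gfact g k)
      = ∑' p : ℕ × ℕ, u p := tsum_mul_tsum_of_summable_norm
    (f := fun k : ℕ => (k : ℝ) * φ2 ^ k / gfact g k)
    (g := fun k : ℕ => φ1 ^ k / gfact g k) nN2 nZ1
  have eB : (∑' k : ℕ, (k : ℝ) * φ1 ^ k / gfact g k) * (∑' k : ℕ, φ2 ^ k / gfact g k)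
      = ∑' p : ℕ × ℕ, v' p := tsum_mul_tsum_of_summable_norm
    (f := fun k : ℕ => (k : ℝ) * φ1 ^ k / gfact g k)
    (g := fun k : ℕ => φ2 ^ k / gfact g k) nN1 nZ2
  -- reindex v'
  have sv : Summable fun p : ℕ × ℕ => v' p.swap := sv'.prod_symm
  have eswap : (∑' p : ℕ × ℕ, v' p.swap) = ∑' p : ℕ × ℕ, v' p :=
    Equiv.tsum_eq (Equiv.prodComm ℕ ℕ) v'
  set t : ℕ × ℕ → ℝ := fun p =>
    ((p.1 : ℝ) - p.2) * (φ2 ^ p.1 / gfact g p.1) * (φ1 ^ p.2 / gfact g p.2) with ht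
  have htuv : ∀ p : ℕ × ℕ, t p = u p - v' p.swap := by
    intro p
    simp only [ht, hu, hv', Prod.fst_swap, Prod.snd_swap, div_eq_mul_inv]
    ring
  have st : Summable t := by
    refine (su.sub sv).congr fun p => (htuv p).symm
  have etd : (∑' p : ℕ × ℕ, t p) = (∑' p : ℕ × ℕ, u p) - ∑' p : ℕ × ℕ, v' p.swap := by
    rw [← Summable.tsum_sub su sv]
    exact tsum_congr htuv
  -- symmetrize
  have stswap : Summable fun p : ℕ × ℕ => t p.swap := st.prod_symm
  have etswap : (∑' p : ℕ × ℕ, t p.swap) = ∑' p : ℕ × ℕ, t p :=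
    Equiv.tsum_eq (Equiv.prodComm ℕ ℕ) t
  have hnonneg : ∀ p : ℕ × ℕ, 0 ≤ t p + t p.swap := by
    rintro ⟨j, k⟩
    have hgj := gfact_pos hg j
    have hgk := gfact_pos hg k
    have key : t (j, k) + t ((j, k) : ℕ × ℕ).swap
        = ((j : ℝ) - k) * (φ2 ^ j * φ1 ^ k - φ2 ^ k * φ1 ^ j)
          * ((gfact g j)⁻¹ * (gfact g k)⁻¹) := by
      simp only [ht, Prod.swap_prod_mk, div_eq_mul_inv]
      ring
    rw [key]
    have hinv : (0:ℝ) ≤ (gfact g j)⁻¹ * (gfact g k)⁻¹ := by positivity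
    refine mul_nonneg ?_ hinv
    rcases le_total k j with hjk | hjk
    · have h1' : (0:ℝ) ≤ (j : ℝ) - k := by
        have := Nat.cast_le (α := ℝ).2 hjk; linarith
      have h2' : (0:ℝ) ≤ φ2 ^ j * φ1 ^ k - φ2 ^ k * φ1 ^ j :=
        sub_nonneg.2 (pow_cross h1 h12.le hjk)
      exact mul_nonneg h1' h2'
    · have h1' : (j : ℝ) - k ≤ 0 := by
        have := Nat.cast_le (α := ℝ).2 hjk; linarith
      have h2' : φ2 ^ j * φ1 ^ k - φ2 ^ k * φ1 ^ j ≤ 0 :=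
        sub_nonpos.2 (pow_cross h1 h12.le hjk)
      nlinarith [mul_nonneg (neg_nonneg.2 h1') (neg_nonneg.2 h2')]
  have hpos10 : 0 < t (1, 0) + t ((1, 0) : ℕ × ℕ).swap := by
    have hg1 := hg 1 le_rfl
    have key : t (1, 0) + t ((1, 0) : ℕ × ℕ).swap = (φ2 - φ1) / g 1 := by
      simp only [ht, Prod.swap_prod_mk, gfact, Finset.range_one, Finset.range_zero,
        Finset.prod_empty, Finset.prod_singleton, Nat.cast_one, Nat.cast_zero,
        pow_one, pow_zero]
      ring
    rw [key]
    exact div_pos (sub_pos.2 h12) hg1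
  have hsumpos : 0 < ∑' p : ℕ × ℕ, (t p + t p.swap) :=
    Summable.tsum_pos (st.add stswap) hnonneg (1, 0) hpos10
  rw [Summable.tsum_add st stswap, etswap] at hsumpos
  have htpos : 0 < ∑' p : ℕ × ℕ, t p := by linarith
  rw [etd, eswap] at htpos
  rw [eA, eB]
  linarith

lemma continuousOn_density (hg : ∀ k : ℕ, 1 ≤ k → 0 < g k) :
    ContinuousOn (density g) (belowRadius g) := by
  intro φ0 hφ0
  obtain ⟨h0, ψ, hφψ, hψ⟩ := hφ0
  set ψ' : ℝ := (φ0 + ψ) / 2 with hψ'def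
  have hψ0 : 0 < ψ := lt_of_le_of_lt h0 hφψ
  have hφψ' : φ0 < ψ' := by rw [hψ'def]; linarith
  have hψ'ψ : ψ' < ψ := by rw [hψ'def]; linarith
  have hψ'0 : 0 < ψ' := lt_of_le_of_lt h0 hφψ'
  set s : Set ℝ := Set.Ioo (-ψ') ψ' with hs
  have hmem : φ0 ∈ s := ⟨by linarith, hφψ'⟩
  have hopen : IsOpen s := isOpen_Ioo
  have hbd : ∀ (k : ℕ), ∀ x ∈ s, |x| ≤ ψ' := by
    rintro k x ⟨hx1, hx2⟩
    exact le_of_lt (abs_lt.2 ⟨hx1, hx2⟩)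
  have hZcont : ContinuousOn (fun x : ℝ => ∑' k : ℕ, x ^ k / gfact g k) s := by
    refine continuousOn_tsum (fun k => (Continuous.continuousOn (by continuity)))
      (summable_Z hg hψ hψ'0.le hψ'ψ) fun k x hx => ?_
    have hgf := gfact_pos hg k
    rw [Real.norm_eq_abs, abs_div, abs_pow, abs_of_pos hgf]
    gcongr
    exact hbd k x hx
  have hNcont : ContinuousOn (fun x : ℝ => ∑' k : ℕ, (k : ℝ) * x ^ k / gfact g k) s := by
    refine continuousOn_tsum (fun k => (Continuous.continuousOn (by continuity)))
      (summable_N hg hψ hψ'0.le hψ'ψ) fun k x hx => ?_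
    have hgf := gfact_pos hg k
    rw [Real.norm_eq_abs, abs_div, abs_mul, abs_pow, abs_of_pos hgf,
      Nat.abs_cast]
    gcongr
    exact hbd k x hx
  have hZne : (∑' k : ℕ, φ0 ^ k / gfact g k) ≠ 0 :=
    ne_of_gt (Z_pos hg h0 (summable_Z hg hψ h0 hφψ))
  have hca : ContinuousAt (density g) φ0 := by
    have h1 := (hNcont.continuousAt (hopen.mem_nhds hmem)).div
      (hZcont.continuousAt (hopen.mem_nhds hmem)) hZne
    exact h1
  exact hca.continuousWithinAt

lemma strictMonoOn_density (hg : ∀ k : ℕ, 1 ≤ k → 0 < g k) :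
    StrictMonoOn (density g) (belowRadius g) := by
  rintro x ⟨hx0, _⟩ y ⟨hy0, ψ, hyψ, hψ⟩ hxy
  have hZx : 0 < ∑' k : ℕ, x ^ k / gfact g k :=
    Z_pos hg hx0 (summable_Z hg hψ hx0 (hxy.trans hyψ))
  have hZy : 0 < ∑' k : ℕ, y ^ k / gfact g k :=
    Z_pos hg hy0 (summable_Z hg hψ hy0 hyψ)
  have hc := cross_lt hg hx0 hxy hyψ hψ
  simp only [density]
  exact (div_lt_div_iff₀ hZx hZy).2 hc

end Aux

/-- If `φ* > 0` then `ρ` is continuous and strictly increasing on `[0, φ*)`,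
`ρ(0) = 0`, and `ρ` is a bijection from `[0, φ*)` onto `[0, ρ*)` where
`ρ* = sup_{0 ≤ φ < φ*} ρ(φ)` (the target interval `[0, ρ*)` being expressed as
`{y | 0 ≤ y ∧ ∃ φ ∈ [0,φ*), y < ρ(φ)}`). -/
theorem density_strictMono_bijection (g : ℕ → ℝ)
    (hg0 : g 0 = 0) (hg : ∀ k : ℕ, 1 ≤ k → 0 < g k)
    (hphistar : ∃ ψ : ℝ, 0 < ψ ∧ Summable fun k : ℕ => ψ ^ k / gfact g k) :
    ContinuousOn (density g) (belowRadius g) ∧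
    StrictMonoOn (density g) (belowRadius g) ∧
    density g 0 = 0 ∧
    Set.InjOn (density g) (belowRadius g) ∧
    density g '' belowRadius g
      = {y : ℝ | 0 ≤ y ∧ ∃ φ ∈ belowRadius g, y < density g φ} := by
  have hcont := continuousOn_density hg
  have hmono := strictMonoOn_density hg
  have hzero : density g 0 = 0 := by
    have hterm : ∀ k : ℕ, (k : ℝ) * (0:ℝ) ^ k / gfact g k = 0 := by
      intro k
      cases k with
      | zero => simp
      | succ n => simp
    have hN0 : (∑' k : ℕ, (k : ℝ) * (0:ℝ) ^ k / gfact g k) = 0 := by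
      rw [tsum_congr hterm, tsum_zero]
    simp only [density, hN0, zero_div]
  refine ⟨hcont, hmono, hzero, hmono.injOn, ?_⟩
  ext y
  simp only [Set.mem_image, Set.mem_setOf_eq]
  constructor
  · rintro ⟨φ1, hφ1, rfl⟩
    obtain ⟨h10, ψ, h1ψ, hψ⟩ := hφ1
    have hZ1 : 0 < ∑' k : ℕ, φ1 ^ k / gfact g k :=
      Z_pos hg h10 (summable_Z hg hψ h10 h1ψ)
    have hN1 : 0 ≤ ∑' k : ℕ, (k : ℝ) * φ1 ^ k / gfact g k :=
      tsum_nonneg fun k => by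
        have := gfact_pos hg k; positivity
    refine ⟨div_nonneg hN1 hZ1.le, (φ1 + ψ) / 2, ⟨by linarith, ψ, by linarith, hψ⟩, ?_⟩
    exact hmono ⟨h10, ψ, h1ψ, hψ⟩ ⟨by linarith, ψ, by linarith, hψ⟩ (by linarith)
  · rintro ⟨hy0, φ2, hφ2, hlt⟩
    obtain ⟨h20, ψ, h2ψ, hψ⟩ := hφ2
    have hsub : Set.Icc (0:ℝ) φ2 ⊆ belowRadius g := by
      rintro x ⟨hx0, hx2⟩
      exact ⟨hx0, ψ, lt_of_le_of_lt hx2 h2ψ, hψ⟩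
    have hivt := intermediate_value_Icc h20 (hcont.mono hsub)
    have hy : y ∈ Set.Icc (density g 0) (density g φ2) := by
      rw [hzero]; exact ⟨hy0, hlt.le⟩
    obtain ⟨x, hx, hxy⟩ := hivt hy
    exact ⟨x, hsub hx, hxy⟩

end
end

section
/- Assume g satisfies condition (SG): sup_k |g(k+1) − g(k)| < +∞, and there exist k₀ ∈ ℕ and a₀ > 0 such that g(k+l) − g(k) ≥ a₀ for every k ≥ 0 and every l > k₀. Then Z(φ) < +∞ for every φ ≥ 0 (i.e. φ* = +∞), and ρ(φ) → +∞ as φ → +∞ (i.e. ρ* = +∞). -/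
open scoped Classical

set_option maxHeartbeats 1000000

noncomputable section

/-- Under condition (SG) — bounded increments `sup_k |g(k+1) − g(k)| < ∞` and
`g(k+l) − g(k) ≥ a₀` for all `k` and all `l > k₀` — the partition function
`Z(φ) = Σ_k φ^k/g(k)!` is finite (the series is summable) for every `φ ≥ 0`,
i.e. `φ* = +∞`, and `ρ(φ) → +∞` as `φ → +∞`, i.e. `ρ* = +∞`. -/
theorem partition_finite_and_density_tendsto_atTop (g : ℕ → ℝ)
    (hg0 : g 0 = 0) (hg : ∀ k : ℕ, 1 ≤ k → 0 < g k)
    (hSG1 : ∃ C : ℝ, ∀ k : ℕ, |g (k + 1) - g k| ≤ C)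
    (hSG2 : ∃ k₀ : ℕ, ∃ a₀ : ℝ, 0 < a₀ ∧
      ∀ k l : ℕ, k₀ < l → a₀ ≤ g (k + l) - g k) :
    (∀ φ : ℝ, 0 ≤ φ → Summable fun k : ℕ => φ ^ k / gfact g k) ∧
    Filter.Tendsto (density g) Filter.atTop Filter.atTop := by
  obtain ⟨k₀, a₀, ha₀, hsg⟩ := hSG2
  have hgf : ∀ k, 0 < gfact g k := fun k =>
    Finset.prod_pos fun j _ => hg (j + 1) (Nat.le_add_left 1 j)
  have hgnn : ∀ k, 0 ≤ g k := by
    intro k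
    rcases Nat.eq_zero_or_pos k with h | h
    · simp [h, hg0]
    · exact (hg k h).le
  -- g tends to infinity
  have hstep : ∀ k, g k + a₀ ≤ g (k + (k₀ + 1)) := by
    intro k
    have := hsg k (k₀ + 1) (Nat.lt_succ_self k₀)
    linarith
  have hlin : ∀ n m : ℕ, n * (k₀ + 1) ≤ m → (n : ℝ) * a₀ ≤ g m := by
    intro n
    induction n with
    | zero => intro m _; simpa using hgnn m
    | succ n ih =>
      intro m hm
      rw [Nat.succ_mul] at hm
      obtain ⟨m', rfl⟩ : ∃ m', m = m' + (k₀ + 1) := ⟨m - (k₀ + 1), by omega⟩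
      have h1 : n * (k₀ + 1) ≤ m' := by omega
      have h2 := ih m' h1
      have h3 := hstep m'
      push_cast
      linarith
  have hgtop : Filter.Tendsto g Filter.atTop Filter.atTop := by
    rw [Filter.tendsto_atTop]
    intro b
    obtain ⟨n, hn⟩ := exists_nat_ge (b / a₀)
    have hb : b ≤ (n : ℝ) * a₀ := by
      rw [div_le_iff₀ ha₀] at hn; linarith
    filter_upwards [Filter.eventually_ge_atTop (n * (k₀ + 1))] with m hm
    exact hb.trans (hlin n m hm)
  -- summability of the partition function
  have key : ∀ φ : ℝ, 0 ≤ φ → Summable fun k : ℕ => φ ^ k / gfact g k := by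
    intro φ hφ
    apply summable_of_ratio_norm_eventually_le (r := 1 / 2) (by norm_num)
    have hev := hgtop.eventually_ge_atTop (2 * φ + 1)
    rw [Filter.eventually_atTop] at hev
    obtain ⟨M, hM⟩ := hev
    filter_upwards [Filter.eventually_ge_atTop M] with n hn
    have hgn : 2 * φ + 1 ≤ g (n + 1) := hM (n + 1) (by omega)
    have hgpos : 0 < g (n + 1) := hg (n + 1) (by omega)
    have hG : gfact g (n + 1) = gfact g n * g (n + 1) := Finset.prod_range_succ _ _
    have h1 : 0 ≤ φ ^ n / gfact g n := div_nonneg (pow_nonneg hφ n) (hgf n).le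
    have h2 : 0 ≤ φ ^ (n + 1) / gfact g (n + 1) :=
      div_nonneg (pow_nonneg hφ _) (hgf _).le
    rw [Real.norm_of_nonneg h2, Real.norm_of_nonneg h1]
    have hrat : φ / g (n + 1) ≤ 1 / 2 := by
      rw [div_le_iff₀ hgpos]; linarith
    calc φ ^ (n + 1) / gfact g (n + 1)
        = (φ ^ n / gfact g n) * (φ / g (n + 1)) := by
          rw [hG, pow_succ, div_mul_div_comm]
      _ ≤ (φ ^ n / gfact g n) * (1 / 2) := by
          exact mul_le_mul_of_nonneg_left hrat h1
      _ = 1 / 2 * (φ ^ n / gfact g n) := by ring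
  -- summability of the numerator series
  have wkey : ∀ φ : ℝ, 0 ≤ φ → Summable fun k : ℕ => (k : ℝ) * φ ^ k / gfact g k := by
    intro φ hφ
    apply summable_of_ratio_norm_eventually_le (r := 1 / 2) (by norm_num)
    have hev := hgtop.eventually_ge_atTop (4 * φ + 4)
    rw [Filter.eventually_atTop] at hev
    obtain ⟨M, hM⟩ := hev
    filter_upwards [Filter.eventually_ge_atTop (M + 1)] with n hn
    have hgn : 4 * φ + 4 ≤ g (n + 1) := hM (n + 1) (by omega)
    have hgpos : 0 < g (n + 1) := hg (n + 1) (by omega)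
    have hn1 : (1 : ℝ) ≤ (n : ℝ) := by exact_mod_cast Nat.one_le_iff_ne_zero.mpr (by omega)
    have hG : gfact g (n + 1) = gfact g n * g (n + 1) := Finset.prod_range_succ _ _
    have h1 : 0 ≤ (n : ℝ) * φ ^ n / gfact g n :=
      div_nonneg (mul_nonneg (Nat.cast_nonneg n) (pow_nonneg hφ n)) (hgf n).le
    have h2 : 0 ≤ ((n : ℝ) + 1) * φ ^ (n + 1) / gfact g (n + 1) :=
      div_nonneg (mul_nonneg (by positivity) (pow_nonneg hφ _)) (hgf _).le
    rw [Real.norm_of_nonneg (by push_cast; exact h2), Real.norm_of_nonneg h1]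
    push_cast
    rw [hG, pow_succ, div_le_iff₀ (mul_pos (hgf n) hgpos)]
    have hRHS : 1 / 2 * ((n : ℝ) * φ ^ n / gfact g n) * (gfact g n * g (n + 1))
        = 1 / 2 * ((n : ℝ) * φ ^ n) * g (n + 1) := by
      calc 1 / 2 * ((n : ℝ) * φ ^ n / gfact g n) * (gfact g n * g (n + 1))
          = 1 / 2 * ((n : ℝ) * φ ^ n / gfact g n * gfact g n) * g (n + 1) := by ring
        _ = 1 / 2 * ((n : ℝ) * φ ^ n) * g (n + 1) := by
            rw [div_mul_cancel₀ _ (hgf n).ne']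
    rw [hRHS]
    have hkey : 2 * ((n : ℝ) + 1) * φ ≤ (n : ℝ) * g (n + 1) := by
      nlinarith
    have hm2 := mul_le_mul_of_nonneg_right hkey (pow_nonneg hφ n)
    nlinarith
  refine ⟨key, ?_⟩
  -- density tends to infinity
  rw [Filter.tendsto_atTop]
  intro b
  set N : ℕ := ⌈b⌉₊ + 1 with hNdef
  have hN1 : 1 ≤ N := by omega
  have hbN : b ≤ (N : ℝ) - 1 := by
    have := Nat.le_ceil b
    push_cast [hNdef]
    linarith
  set C : ℝ := ∑ k ∈ Finset.range N, 1 / gfact g k with hCdef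
  filter_upwards [Filter.eventually_ge_atTop (1 : ℝ),
    Filter.eventually_ge_atTop ((N : ℝ) * C * gfact g N)] with φ hφ1 hφ2
  have hφ0 : 0 ≤ φ := by linarith
  have hφpos : 0 < φ := by linarith
  have hsum := key φ hφ0
  have hsum2 := wkey φ hφ0
  set Z := ∑' k : ℕ, φ ^ k / gfact g k with hZdef
  set S := ∑' k : ℕ, (k : ℝ) * φ ^ k / gfact g k with hSdef
  have hterm_nn : ∀ k : ℕ, 0 ≤ φ ^ k / gfact g k := fun k =>
    div_nonneg (pow_nonneg hφ0 k) (hgf k).le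
  have hZ_ge : φ ^ N / gfact g N ≤ Z :=
    Summable.le_tsum hsum N fun k _ => hterm_nn k
  have hZpos : 0 < Z := lt_of_lt_of_le (div_pos (pow_pos hφpos N) (hgf N)) hZ_ge
  set P : ℝ := ∑ k ∈ Finset.range N, φ ^ k / gfact g k with hPdef
  have hPle : P ≤ C * φ ^ (N - 1) := by
    rw [hPdef, hCdef, Finset.sum_mul]
    apply Finset.sum_le_sum
    intro k hk
    have hk' : k ≤ N - 1 := by
      simp only [Finset.mem_range] at hk; omega
    have hpow : φ ^ k ≤ φ ^ (N - 1) := pow_le_pow_right₀ hφ1 hk'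
    rw [one_div, inv_mul_eq_div]
    exact (div_le_div_iff_of_pos_right (hgf k)).mpr hpow
  have hpowsplit : φ ^ N = φ ^ (N - 1) * φ := by
    conv_lhs => rw [show N = (N - 1) + 1 by omega]
    rw [pow_succ]
  have hNP : (N : ℝ) * P ≤ Z := by
    have h1 : (N : ℝ) * P ≤ (N : ℝ) * (C * φ ^ (N - 1)) :=
      mul_le_mul_of_nonneg_left hPle (Nat.cast_nonneg N)
    have h2 : (N : ℝ) * (C * φ ^ (N - 1)) ≤ φ ^ N / gfact g N := by
      rw [le_div_iff₀ (hgf N), hpowsplit]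
      have := mul_le_mul_of_nonneg_left hφ2 (pow_nonneg hφ0 (N - 1))
      nlinarith
    linarith
  set T := ∑' k : ℕ, φ ^ (k + N) / gfact g (k + N) with hTdef
  have htail : P + T = Z := Summable.sum_add_tsum_nat_add N hsum
  have hsumT : Summable fun k : ℕ => φ ^ (k + N) / gfact g (k + N) :=
    (summable_nat_add_iff (f := fun k : ℕ => φ ^ k / gfact g k) N).mpr hsum
  have hsum2' : Summable fun k : ℕ => ((k + N : ℕ) : ℝ) * φ ^ (k + N) / gfact g (k + N) :=
    (summable_nat_add_iff (f := fun k : ℕ => (k : ℝ) * φ ^ k / gfact g k) N).mpr hsum2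
  have hS_ge : (N : ℝ) * T ≤ S := by
    have e : (∑ k ∈ Finset.range N, (k : ℝ) * φ ^ k / gfact g k)
        + ∑' k : ℕ, ((k + N : ℕ) : ℝ) * φ ^ (k + N) / gfact g (k + N) = S :=
      Summable.sum_add_tsum_nat_add N hsum2
    have h1 : (N : ℝ) * T = ∑' k : ℕ, (N : ℝ) * (φ ^ (k + N) / gfact g (k + N)) := by
      rw [hTdef, tsum_mul_left]
    have h2 : ∑' k : ℕ, (N : ℝ) * (φ ^ (k + N) / gfact g (k + N))
        ≤ ∑' k : ℕ, ((k + N : ℕ) : ℝ) * φ ^ (k + N) / gfact g (k + N) := by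
      apply Summable.tsum_le_tsum _ (hsumT.mul_left _) hsum2'
      intro k
      rw [mul_div_assoc]
      apply mul_le_mul_of_nonneg_right _ (hterm_nn (k + N))
      push_cast
      linarith [Nat.cast_nonneg (α := ℝ) k]
    have h2' : (N : ℝ) * T ≤ ∑' k : ℕ, ((k + N : ℕ) : ℝ) * φ ^ (k + N) / gfact g (k + N) := by
      rw [h1]; exact h2
    have h3 : 0 ≤ ∑ k ∈ Finset.range N, (k : ℝ) * φ ^ k / gfact g k :=
      Finset.sum_nonneg fun k _ =>
        div_nonneg (mul_nonneg (Nat.cast_nonneg k) (pow_nonneg hφ0 k)) (hgf k).le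
    linarith
  have hfinal : ((N : ℝ) - 1) * Z ≤ S := by
    have hTZ : (N : ℝ) * T = (N : ℝ) * Z - (N : ℝ) * P := by
      rw [← htail]; ring
    nlinarith
  show b ≤ density g φ
  rw [density, ← hSdef, ← hZdef, le_div_iff₀ hZpos]
  nlinarith

end
end
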